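/- arXiv:math/0608432 — 6 statements merged into one kernel-verified Lean document; each statement's English description precedes it below -/
import Mathlib

section
/- Let h be a point of the rotation set φ_*(M_T). If the rotation class φ_*^{-1}(h) consists of a single measure and this measure is ergodic, then h is an extremal point of the rotation set φ_*(M_T). -/
open MeasureTheory Filter Topology Metric Set

section ErgodicAux
variable {Y : Type*} [MeasurableSpace Y]
private lemma ergodic_ac_eq {T : Y → Y} (hTm : Measurable T) {μ ν : Measure Y}
    [IsProbabilityMeasure μ] [IsProbabilityMeasure ν]
    (herg : Ergodic T μ) (hν : Measure.map T ν = ν) (hac : ν ≪ μ) : ν = μ := by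
  set f := ν.rnDeriv μ with hfdef
  have hf : Measurable f := Measure.measurable_rnDeriv ν μ
  have hwd : μ.withDensity f = ν := Measure.withDensity_rnDeriv_eq ν μ hac
  have hμinv : Measure.map T μ = μ := herg.toMeasurePreserving.map_eq
  set E : Set Y := {x | f x < 1} with hEdef
  have hE : MeasurableSet E := measurableSet_lt hf measurable_const
  have hνap : ∀ s : Set Y, MeasurableSet s → ν s = ∫⁻ x in s, f x ∂μ := by
    intro s hs
    rw [← hwd, withDensity_apply f hs]
  have hμE : μ (T ⁻¹' E) = μ E := by
    conv_rhs => rw [← hμinv]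
    rw [Measure.map_apply hTm hE]
  have hνE : ν (T ⁻¹' E) = ν E := by
    conv_rhs => rw [← hν]
    rw [Measure.map_apply hTm hE]
  have hTE : MeasurableSet (T ⁻¹' E) := hTm hE
  set P : Set Y := T ⁻¹' E \ E with hPdef
  set Q : Set Y := E \ T ⁻¹' E with hQdef
  have hPm : MeasurableSet P := hTE.diff hE
  have hQm : MeasurableSet Q := hE.diff hTE
  have hcancel : ∀ (ρ : Measure Y) [IsProbabilityMeasure ρ],
      ρ (T ⁻¹' E) = ρ E → ρ P = ρ Q := by
    intro ρ _ hρ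
    have h1 : ρ (T ⁻¹' E ∩ E) + ρ P = ρ (T ⁻¹' E) := measure_inter_add_diff _ hE
    have h2 : ρ (E ∩ T ⁻¹' E) + ρ Q = ρ E := measure_inter_add_diff _ hTE
    rw [Set.inter_comm] at h2
    rw [hρ, ← h2] at h1
    exact (ENNReal.add_right_inj (measure_ne_top ρ _)).mp h1
  have hμPQ : μ P = μ Q := hcancel μ hμE
  have hνPQ : ν P = ν Q := hcancel ν hνE
  -- show μ Q = 0
  have hQ0 : μ Q = 0 := by
    by_contra hQ0
    have hle1 : μ P ≤ ν P := by
      rw [hνap P hPm]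
      calc μ P = ∫⁻ _x in P, 1 ∂μ := by simp
      _ ≤ ∫⁻ x in P, f x ∂μ := by
          refine setLIntegral_mono hf fun x hx => ?_
          have : ¬ f x < 1 := hx.2
          exact not_lt.mp this
    have hle2 : ν Q ≤ μ Q := by
      rw [hνap Q hQm]
      calc ∫⁻ x in Q, f x ∂μ ≤ ∫⁻ _x in Q, 1 ∂μ := by
            refine setLIntegral_mono measurable_const fun x hx => ?_
            exact le_of_lt hx.1
      _ = μ Q := by simp
    have hνQ : ν Q = μ Q := le_antisymm hle2 (by rw [← hνPQ, ← hμPQ]; exact hle1)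
    -- ∫ (1 - f) over Q = 0
    have hfin : ∫⁻ x in Q, f x ∂μ ≠ ⊤ := by
      rw [← hνap Q hQm]; exact measure_ne_top ν Q
    have hle : f ≤ᵐ[μ.restrict Q] fun _ => (1 : ENNReal) := by
      refine (ae_restrict_iff' hQm).2 (ae_of_all _ fun x hx => le_of_lt hx.1)
    have hsub : ∫⁻ x in Q, (1 - f x) ∂μ = ∫⁻ _x in Q, 1 ∂μ - ∫⁻ x in Q, f x ∂μ :=
      lintegral_sub hf hfin hle
    have hz : ∫⁻ x in Q, (1 - f x) ∂μ = 0 := by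
      rw [hsub]
      have : ∫⁻ _x in Q, (1:ENNReal) ∂μ = μ Q := by simp
      rw [this, ← hνQ, hνap Q hQm]
      exact tsub_eq_zero_of_le le_rfl
    have := (lintegral_eq_zero_iff (measurable_const.sub hf)).mp hz
    -- a.e. on Q, 1 - f x = 0, i.e. 1 ≤ f x; but f < 1 on Q
    have hQsub : Q ⊆ {x | ¬ ((fun x => 1 - f x) x = 0)} := by
      intro x hx
      simp only [Set.mem_setOf_eq, tsub_eq_zero_iff_le]
      exact not_le.mpr hx.1
    have : μ.restrict Q {x | ¬ ((fun x => 1 - f x) x = 0)} = 0 := this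
    have hcontra : μ Q = 0 := by
      have h1 : μ.restrict Q Q = 0 :=
        le_antisymm (le_trans (measure_mono hQsub) this.le) zero_le
      rwa [Measure.restrict_apply_self] at h1
    exact hQ0 hcontra
  have hμP : μ P = 0 := by rw [hμPQ]; exact hQ0
  -- T⁻¹ E =ᵐ E
  have haeeq : T ⁻¹' E =ᵐ[μ] E := by
    rw [Filter.eventuallyEq_set]
    have h1 : ∀ᵐ x ∂μ, x ∉ P := by
      rw [ae_iff]; simpa using hμP
    have h2 : ∀ᵐ x ∂μ, x ∉ Q := by
      rw [ae_iff]; simpa using hQ0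
    filter_upwards [h1, h2] with x hx1 hx2
    constructor
    · intro hx; by_contra hxE; exact hx1 ⟨hx, hxE⟩
    · intro hx; by_contra hxT; exact hx2 ⟨hx, hxT⟩
  have hf1 : f =ᵐ[μ] fun _ => (1 : ENNReal) := by
    have hint : ∫⁻ x, f x ∂μ = 1 := by
      have := hνap univ MeasurableSet.univ
      simp only [Measure.restrict_univ] at this
      rw [← this]; simp
    rcases herg.quasiErgodic.ae_empty_or_univ₀ hE.nullMeasurableSet haeeq with hcase | hcase
    · -- E ae empty : f ≥ 1 a.e.
      have hge : ∀ᵐ x ∂μ, 1 ≤ f x := by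
        have := Filter.eventuallyEq_set.mp hcase
        filter_upwards [this] with x hx
        have : x ∉ E := fun hxE => (hx.mp hxE)
        exact not_lt.mp this
      have hsub : ∫⁻ x, (f x - 1) ∂μ = ∫⁻ x, f x ∂μ - ∫⁻ _x, (1:ENNReal) ∂μ :=
        lintegral_sub measurable_const (by simp) hge
      have hz : ∫⁻ x, (f x - 1) ∂μ = 0 := by
        rw [hsub, hint]; simp
      have := (lintegral_eq_zero_iff (hf.sub measurable_const)).mp hz
      filter_upwards [this, hge] with x hx1 hx2
      have : f x ≤ 1 := tsub_eq_zero_iff_le.mp hx1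
      exact le_antisymm this hx2
    · -- E ae univ : f < 1 a.e., contradiction path, still conclude f = 1 a.e.
      have hlt : ∀ᵐ x ∂μ, f x < 1 := by
        have := Filter.eventuallyEq_set.mp hcase
        filter_upwards [this] with x hx
        exact hx.mpr trivial
      have hle : f ≤ᵐ[μ] fun _ => (1:ENNReal) := hlt.mono fun x hx => le_of_lt hx
      have hsub : ∫⁻ x, ((1:ENNReal) - f x) ∂μ = ∫⁻ _x, (1:ENNReal) ∂μ - ∫⁻ x, f x ∂μ :=
        lintegral_sub hf (by rw [hint]; exact ENNReal.one_ne_top) hle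
      have hz : ∫⁻ x, ((1:ENNReal) - f x) ∂μ = 0 := by
        rw [hsub, hint]; simp
      have := (lintegral_eq_zero_iff (measurable_const.sub hf)).mp hz
      filter_upwards [this, hlt] with x hx1 hx2
      exact absurd (tsub_eq_zero_iff_le.mp hx1) (not_le.mpr hx2)
  rw [← hwd, withDensity_congr_ae hf1, show (fun _ : Y => (1:ENNReal)) = 1 from rfl, withDensity_one]

end ErgodicAux


variable {X : Type*} [MetricSpace X] [CompactSpace X] [MeasurableSpace X] [BorelSpace X]

/-- The set of `T`-invariant Borel probability measures on `X`. -/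
def MT (T : X → X) : Set (ProbabilityMeasure X) :=
  {μ | (μ : Measure X).map T = (μ : Measure X)}

/-- The rotation vector `φ_*(μ)` of a measure `μ` with respect to a constraint `φ`. -/
noncomputable def rotv {n : ℕ} (φ : X → EuclideanSpace ℝ (Fin n))
    (μ : ProbabilityMeasure X) : EuclideanSpace ℝ (Fin n) :=
  ∫ x, φ x ∂(μ : Measure X)

/-- The integral of the potential `A` against a measure. -/
noncomputable def intA (A : X → ℝ) (μ : ProbabilityMeasure X) : ℝ :=
  ∫ x, A x ∂(μ : Measure X)

/-- The beta function `β_{A,φ}(h) = sup {∫ A dμ : μ ∈ M_T, φ_*(μ) = h}`. -/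
noncomputable def betaFn {n : ℕ} (T : X → X) (A : X → ℝ)
    (φ : X → EuclideanSpace ℝ (Fin n)) (h : EuclideanSpace ℝ (Fin n)) : ℝ :=
  sSup (intA A '' {μ ∈ MT T | rotv φ μ = h})

/-- The alpha function `α_{A,φ}(c) = min_{h ∈ φ_*(M_T)} (⟨c,h⟩ - β_{A,φ}(h))`. -/
noncomputable def alphaFn {n : ℕ} (T : X → X) (A : X → ℝ)
    (φ : X → EuclideanSpace ℝ (Fin n)) (c : EuclideanSpace ℝ (Fin n)) : ℝ :=
  sInf ((fun h => (inner ℝ c h : ℝ) - betaFn T A φ h) '' (rotv φ '' MT T))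

/-- The set `m_{A,φ}(h)` of `(A,h)`-maximizing measures. -/
noncomputable def mset {n : ℕ} (T : X → X) (A : X → ℝ)
    (φ : X → EuclideanSpace ℝ (Fin n)) (h : EuclideanSpace ℝ (Fin n)) :
    Set (ProbabilityMeasure X) :=
  {μ ∈ MT T | rotv φ μ = h ∧ intA A μ = betaFn T A φ h}

/-- if the rotation class of `h` is the singleton `{μ}` and `μ` is ergodic,
then `h` is an extremal point of the rotation set `φ_*(M_T)`. -/
theorem stmt0 {n : ℕ} (T : X → X) (hT : Continuous T)
    (φ : X → EuclideanSpace ℝ (Fin n)) (hφ : Continuous φ)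
    (h : EuclideanSpace ℝ (Fin n)) (hh : h ∈ rotv φ '' MT T)
    (μ : ProbabilityMeasure X)
    (hfib : {ν ∈ MT T | rotv φ ν = h} = {μ})
    (herg : Ergodic T (μ : Measure X)) :
    h ∈ Set.extremePoints ℝ (rotv φ '' MT T) := by
  rw [mem_extremePoints]
  refine ⟨hh, ?_⟩
  -- μ is in the fiber
  have hμfib : μ ∈ {ν ∈ MT T | rotv φ ν = h} := by rw [hfib]; exact rfl
  obtain ⟨hμMT, hμrot⟩ := hμfib
  rintro y₁ ⟨ν₁, hν₁, rfl⟩ y₂ ⟨ν₂, hν₂, rfl⟩ ⟨a, b, ha, hb, hab, heq⟩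
  have hint : ∀ ρ : ProbabilityMeasure X, Integrable φ (ρ : Measure X) := fun ρ =>
    hφ.integrable_of_hasCompactSupport (HasCompactSupport.of_compactSpace φ)
  set a' : ENNReal := ENNReal.ofReal a with ha'
  set b' : ENNReal := ENNReal.ofReal b with hb'
  have ha'top : a' ≠ ⊤ := ENNReal.ofReal_ne_top
  have hb'top : b' ≠ ⊤ := ENNReal.ofReal_ne_top
  set m : Measure X := a' • (ν₁ : Measure X) + b' • (ν₂ : Measure X) with hm
  have hmprob : IsProbabilityMeasure m := by
    constructor
    simp only [hm, Measure.add_apply, Measure.smul_apply, smul_eq_mul, measure_univ, mul_one]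
    rw [ha', hb', ← ENNReal.ofReal_add ha.le hb.le, hab]
    simp
  set ν : ProbabilityMeasure X := ⟨m, hmprob⟩ with hν
  have hνMT : ν ∈ MT T := by
    show Measure.map T m = m
    rw [hm, Measure.map_add _ _ hT.measurable, Measure.map_smul, Measure.map_smul,
      hν₁, hν₂]
  have hint1 : Integrable φ (a' • (ν₁ : Measure X)) := (hint ν₁).smul_measure ha'top
  have hint2 : Integrable φ (b' • (ν₂ : Measure X)) := (hint ν₂).smul_measure hb'top
  have hνrot : rotv φ ν = h := by
    show (∫ x, φ x ∂m) = h
    rw [hm, integral_add_measure hint1 hint2, integral_smul_measure, integral_smul_measure]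
    rw [ha', hb', ENNReal.toReal_ofReal ha.le, ENNReal.toReal_ofReal hb.le]
    exact heq
  have hνμ : ν = μ := by
    have : ν ∈ {ν ∈ MT T | rotv φ ν = h} := ⟨hνMT, hνrot⟩
    rwa [hfib] at this
  have hμm : (μ : Measure X) = m := by rw [← hνμ]; rfl
  have hac : ∀ (ρ : ProbabilityMeasure X) (c : ENNReal), c ≠ 0 →
      (∀ s, m s = 0 → (c • (ρ : Measure X)) s ≤ m s) → (ρ : Measure X) ≪ (μ : Measure X) := by
    intro ρ c hc hle
    intro s hs
    rw [hμm] at hs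
    have := hle s hs
    rw [hs] at this
    simp only [Measure.smul_apply, smul_eq_mul, nonpos_iff_eq_zero, mul_eq_zero] at this
    exact this.resolve_left hc
  have key : ∀ ρ : ProbabilityMeasure X, ρ ∈ MT T → (ρ : Measure X) ≪ (μ : Measure X) →
      rotv φ ρ = h := by
    intro ρ hρ hacρ
    have := ergodic_ac_eq hT.measurable herg hρ hacρ
    show (∫ x, φ x ∂(ρ : Measure X)) = h
    rw [this]
    exact hμrot
  have ha'0 : a' ≠ 0 := by simp [ha', ENNReal.ofReal_eq_zero, not_le, ha]
  have hb'0 : b' ≠ 0 := by simp [hb', ENNReal.ofReal_eq_zero, not_le, hb]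
  constructor
  · refine key ν₁ hν₁ (hac ν₁ a' ha'0 fun s hs => ?_)
    rw [hm]
    exact le_add_right le_rfl
  · refine key ν₂ hν₂ (hac ν₂ b' hb'0 fun s hs => ?_)
    rw [hm]
    exact le_add_left le_rfl
end

section
/- If h is an extremal point of the rotation set φ_*(M_T), then every extremal point of the rotation class φ_*^{-1}(h) is an ergodic measure. -/
open MeasureTheory Filter Topology Metric Set

variable {X : Type*} [MetricSpace X] [CompactSpace X] [MeasurableSpace X] [BorelSpace X]

/-- if `h` is an extremal point of the rotation set `φ_*(M_T)`, then every
extremal point `μ` of the rotation class `φ_*^{-1}(h)` is an ergodic measure.  Extremality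
of `μ` in the (convex) rotation class is expressed by: whenever `μ` is a nontrivial convex
combination `t • ν₁ + (1-t) • ν₂` of two members of the class, then `ν₁ = μ` and `ν₂ = μ`. -/
theorem stmt1 {n : ℕ} (T : X → X) (hT : Continuous T)
    (φ : X → EuclideanSpace ℝ (Fin n)) (hφ : Continuous φ)
    (h : EuclideanSpace ℝ (Fin n))
    (hh : h ∈ Set.extremePoints ℝ (rotv φ '' MT T))
    (μ : ProbabilityMeasure X) (hμT : μ ∈ MT T) (hμh : rotv φ μ = h)
    (hext : ∀ ν₁ ∈ {ν ∈ MT T | rotv φ ν = h}, ∀ ν₂ ∈ {ν ∈ MT T | rotv φ ν = h},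
      ∀ t : NNReal, 0 < t → t < 1 →
        (μ : Measure X) = t • (ν₁ : Measure X) + (1 - t) • (ν₂ : Measure X) →
        ν₁ = μ ∧ ν₂ = μ) :
    Ergodic T (μ : Measure X) := by
  
  have hmeas : Measurable T := hT.measurable
  have hμTm : (μ : Measure X).map T = (μ : Measure X) := hμT
  refine ⟨⟨hmeas, hμTm⟩, ⟨fun s hs hTs => ?_⟩⟩
  by_contra hcon
  rw [Filter.eventuallyConst_set', MeasureTheory.ae_eq_empty, MeasureTheory.ae_eq_univ] at hcon
  push_neg at hcon
  obtain ⟨h0, h1⟩ := hcon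
  set m : Measure X := (μ : Measure X) with hm
  -- conditional measures
  haveI i1 : IsProbabilityMeasure (ProbabilityTheory.cond m s) := ProbabilityTheory.cond_isProbabilityMeasure h0
  haveI i2 : IsProbabilityMeasure (ProbabilityTheory.cond m sᶜ) := ProbabilityTheory.cond_isProbabilityMeasure h1
  set ν₁ : ProbabilityMeasure X := ⟨ProbabilityTheory.cond m s, i1⟩ with hν₁
  set ν₂ : ProbabilityMeasure X := ⟨ProbabilityTheory.cond m sᶜ, i2⟩ with hν₂
  -- invariance of conditionals
  have hinv : ∀ u : Set X, MeasurableSet u → T ⁻¹' u = u →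
      Measure.map T (ProbabilityTheory.cond m u) = ProbabilityTheory.cond m u := by
    intro u hu hTu
    have hres : Measure.map T (m.restrict u) = m.restrict u := by
      ext E hE
      calc Measure.map T (m.restrict u) E = m (T ⁻¹' E ∩ u) := by
            rw [Measure.map_apply hmeas hE, Measure.restrict_apply (hmeas hE)]
        _ = m (T ⁻¹' (E ∩ u)) := by rw [Set.preimage_inter, hTu]
        _ = m (E ∩ u) := by rw [← Measure.map_apply hmeas (hE.inter hu), hμTm]
        _ = m.restrict u E := (Measure.restrict_apply hE).symm
    rw [ProbabilityTheory.cond, Measure.map_smul, hres]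
  have hTsc : T ⁻¹' sᶜ = sᶜ := by rw [Set.preimage_compl, hTs]
  have hν₁T : ν₁ ∈ MT T := hinv s hs hTs
  have hν₂T : ν₂ ∈ MT T := hinv sᶜ hs.compl hTsc
  -- the coefficient t
  set t : NNReal := (m s).toNNReal with ht
  have hsne : m s ≠ ⊤ := measure_ne_top m s
  have hts : (t : ENNReal) = m s := ENNReal.coe_toNNReal hsne
  have ht0 : 0 < t := ENNReal.toNNReal_pos h0 hsne
  have hslt : m s < 1 := by
    rcases lt_or_eq_of_le (prob_le_one (μ := m) (s := s)) with hlt | heq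
    · exact hlt
    · exfalso
      apply h1
      have := measure_add_measure_compl (μ := m) hs
      rw [heq, measure_univ] at this
      have h2 : (1 : ENNReal) + m sᶜ = 1 + 0 := by rw [add_zero]; exact this
      exact (ENNReal.add_right_inj (by norm_num)).mp h2
  have ht1 : t < 1 := by
    have : (t : ENNReal) < ((1 : NNReal) : ENNReal) := by rw [hts]; exact_mod_cast hslt
    exact_mod_cast this
  have htc : ((1 - t : NNReal) : ENNReal) = m sᶜ := by
    rw [ENNReal.coe_sub, hts, measure_compl hs hsne, measure_univ, ENNReal.coe_one]
  -- the decomposition of m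
  have hdec : m = t • (ν₁ : Measure X) + (1 - t) • (ν₂ : Measure X) := by
    have e1 : t • (ν₁ : Measure X) = m.restrict s := by
      rw [ENNReal.smul_def, hts]
      show m s • (ProbabilityTheory.cond m s) = m.restrict s
      rw [ProbabilityTheory.cond, smul_smul, ENNReal.mul_inv_cancel h0 hsne, one_smul]
    have e2 : (1 - t) • (ν₂ : Measure X) = m.restrict sᶜ := by
      rw [ENNReal.smul_def, htc]
      show m sᶜ • (ProbabilityTheory.cond m sᶜ) = m.restrict sᶜ
      rw [ProbabilityTheory.cond, smul_smul, ENNReal.mul_inv_cancel h1 (measure_ne_top m sᶜ),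
        one_smul]
    rw [e1, e2, Measure.restrict_add_restrict_compl hs]
  -- rotation vectors
  have hint : ∀ ρ : Measure X, IsFiniteMeasure ρ → Integrable φ ρ := fun ρ hρ =>
    hφ.integrable_of_hasCompactSupport (HasCompactSupport.of_compactSpace φ)
  have hseg : rotv φ μ = (t : ℝ) • rotv φ ν₁ + ((1 - t : NNReal) : ℝ) • rotv φ ν₂ := by
    have : rotv φ μ = ∫ x, φ x ∂(((t : ENNReal) • (ν₁ : Measure X)) + ((((1 - t : NNReal)) : ENNReal) • (ν₂ : Measure X))) := by
      rw [rotv]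
      congr 1
    rw [this, integral_add_measure ((hint _ inferInstance).smul_measure ENNReal.coe_ne_top)
      ((hint _ inferInstance).smul_measure ENNReal.coe_ne_top), integral_smul_measure,
      integral_smul_measure, ENNReal.coe_toReal, ENNReal.coe_toReal]
    rfl
  -- extremality of h in the rotation set
  have hmem1 : rotv φ ν₁ ∈ rotv φ '' MT T := ⟨ν₁, hν₁T, rfl⟩
  have hmem2 : rotv φ ν₂ ∈ rotv φ '' MT T := ⟨ν₂, hν₂T, rfl⟩
  have hopen : h ∈ openSegment ℝ (rotv φ ν₁) (rotv φ ν₂) := by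
    refine ⟨(t : ℝ), ((1 - t : NNReal) : ℝ), ?_, ?_, ?_, ?_⟩
    · exact_mod_cast ht0
    · have : (0 : NNReal) < 1 - t := tsub_pos_of_lt ht1
      exact_mod_cast this
    · push_cast [NNReal.coe_sub ht1.le]
      ring
    · rw [← hμh, hseg]
  obtain ⟨hr1, hr2⟩ := (mem_extremePoints.mp hh).2 _ hmem1 _ hmem2 hopen
  -- apply extremality of μ in the rotation class
  obtain ⟨he1, _⟩ := hext ν₁ ⟨hν₁T, hr1⟩ ν₂ ⟨hν₂T, hr2⟩ t ht0 ht1 hdec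
  -- contradiction: ν₁ s = 1 but m s < 1
  have : m s = 1 := by
    have hcond : (ProbabilityTheory.cond m s) s = 1 := by
      rw [ProbabilityTheory.cond_apply hs, Set.inter_self,
        ENNReal.inv_mul_cancel h0 hsne]
    calc m s = (ν₁ : Measure X) s := by rw [he1]
      _ = 1 := hcond
  exact absurd this hslt.ne
end

section
/- Let U ⊂ C⁰(X,X) carry the topology induced by the supremum metric, and let T ∈ U ↦ φ_T ∈ C⁰(X,ℝ^n) be a continuous assignment. Then the application Γ_U : U → K(ℝ^n) defined by Γ_U(T) = (φ_T)_*(M_T) is upper semi-continuous: for every T ∈ U and ε > 0 there is a neighborhood V of T in U such that Γ_U(S) is contained in the open ε-neighborhood of Γ_U(T) for every S ∈ V. -/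
open MeasureTheory Filter Topology Metric Set BoundedContinuousFunction NNReal ENNReal

set_option linter.unusedSectionVars false

noncomputable section Aux

variable {X : Type*} [MetricSpace X] [CompactSpace X] [MeasurableSpace X] [BorelSpace X]

lemma exists_ulim (𝒰 : Ultrafilter ℕ) (u : ℕ → ℝ) (C : ℝ) (hC : ∀ k, |u k| ≤ C) :
    ∃ l, Tendsto u 𝒰 (𝓝 l) := by
  have h : ↑(𝒰.map u) ≤ 𝓟 (Icc (-C) C) := by
    exact Filter.le_principal_iff.2
      (Filter.univ_mem' (s := u ⁻¹' Icc (-C) C) (fun k => abs_le.1 (hC k)))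
  obtain ⟨l, -, hl⟩ := isCompact_Icc.ultrafilter_le_nhds (𝒰.map u) h
  exact ⟨l, hl⟩

variable (𝒰 : Ultrafilter ℕ) (μs : ℕ → ProbabilityMeasure X)

/-- The ultrafilter limit of integrals of a bounded continuous function. -/
def JJ (g : X →ᵇ ℝ) : ℝ :=
  (exists_ulim 𝒰 (fun k => ∫ x, g x ∂(μs k : Measure X)) ‖g‖
    (fun k => by
      simpa using BoundedContinuousFunction.norm_integral_le_norm (μs k : Measure X) g)).choose

lemma tendsto_JJ (g : X →ᵇ ℝ) :
    Tendsto (fun k => ∫ x, g x ∂(μs k : Measure X)) 𝒰 (𝓝 (JJ 𝒰 μs g)) :=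
  (exists_ulim 𝒰 (fun k => ∫ x, g x ∂(μs k : Measure X)) ‖g‖
    (fun k => by
      simpa using BoundedContinuousFunction.norm_integral_le_norm (μs k : Measure X) g)).choose_spec

variable {𝒰 μs}

lemma JJ_eq_of_tendsto {g : X →ᵇ ℝ} {l : ℝ}
    (h : Tendsto (fun k => ∫ x, g x ∂(μs k : Measure X)) 𝒰 (𝓝 l)) : JJ 𝒰 μs g = l :=
  tendsto_nhds_unique (tendsto_JJ 𝒰 μs g) h

lemma JJ_add (g h : X →ᵇ ℝ) : JJ 𝒰 μs (g + h) = JJ 𝒰 μs g + JJ 𝒰 μs h := by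
  refine JJ_eq_of_tendsto ?_
  have := (tendsto_JJ 𝒰 μs g).add (tendsto_JJ 𝒰 μs h)
  refine this.congr fun k => ?_
  rw [← integral_add (g.integrable _) (h.integrable _)]
  simp

lemma JJ_smul (c : ℝ) (g : X →ᵇ ℝ) : JJ 𝒰 μs (c • g) = c * JJ 𝒰 μs g := by
  refine JJ_eq_of_tendsto ?_
  have := (tendsto_JJ 𝒰 μs g).const_mul c
  refine this.congr fun k => ?_
  have : ∫ x, (c • g) x ∂(μs k : Measure X) = c • ∫ x, g x ∂(μs k : Measure X) := by
    simp only [BoundedContinuousFunction.coe_smul, Pi.smul_apply]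
    exact integral_smul c _
  rw [this, smul_eq_mul]

lemma JJ_mono {g h : X →ᵇ ℝ} (hgh : ∀ x, g x ≤ h x) : JJ 𝒰 μs g ≤ JJ 𝒰 μs h := by
  refine le_of_tendsto_of_tendsto (tendsto_JJ 𝒰 μs g) (tendsto_JJ 𝒰 μs h) ?_
  exact Eventually.of_forall fun k => integral_mono (g.integrable _) (h.integrable _) hgh

lemma JJ_one : JJ 𝒰 μs 1 = 1 := by
  refine JJ_eq_of_tendsto ?_
  have : ∀ k, ∫ x, (1 : X →ᵇ ℝ) x ∂(μs k : Measure X) = 1 := by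
    intro k; simp
  simp only [this]
  exact tendsto_const_nhds

lemma JJ_nonneg {g : X →ᵇ ℝ} (hg : ∀ x, 0 ≤ g x) : 0 ≤ JJ 𝒰 μs g := by
  refine ge_of_tendsto (tendsto_JJ 𝒰 μs g) (Eventually.of_forall fun k => integral_nonneg hg)



variable (𝒰) (μs)

theorem exists_limit_measure :
    ∃ ν : ProbabilityMeasure X, ∀ g : C(X, ℝ),
      Tendsto (fun k => ∫ x, g x ∂(μs k : Measure X)) 𝒰 (𝓝 (∫ x, g x ∂(ν : Measure X))) := by
  obtain ⟨ν, -, hν⟩ := isCompact_univ.ultrafilter_le_nhds (𝒰.map μs) (by simp)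
  refine ⟨ν, fun g => ?_⟩
  have h := ProbabilityMeasure.tendsto_iff_forall_integral_tendsto.1
    (show Tendsto μs 𝒰 (𝓝 ν) from hν) (mkOfCompact g)
  simpa using h

end Aux

section Main

variable {X : Type*} [MetricSpace X] [CompactSpace X] [MeasurableSpace X] [BorelSpace X]

lemma contIntegrable {E : Type*} [NormedAddCommGroup E] [SecondCountableTopology E]
    [MeasurableSpace E] [BorelSpace E] (g : C(X, E)) (σ : Measure X) [IsFiniteMeasure σ] :
    Integrable ⇑g σ := by
  exact (mkOfCompact g).integrable σ

end Main

variable {X : Type*} [MetricSpace X] [CompactSpace X] [MeasurableSpace X] [BorelSpace X]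

lemma rotv_dist_le {n : ℕ} (ψ₁ ψ₂ : C(X, EuclideanSpace ℝ (Fin n)))
    (σ : ProbabilityMeasure X) :
    ‖rotv ⇑ψ₁ σ - rotv ⇑ψ₂ σ‖ ≤ dist ψ₁ ψ₂ := by
  rw [rotv, rotv, ← integral_sub (contIntegrable ψ₁ _) (contIntegrable ψ₂ _)]
  have h := norm_integral_le_of_norm_le_const (μ := (σ : Measure X)) (C := dist ψ₁ ψ₂)
    (f := fun x => ψ₁ x - ψ₂ x)
    (Filter.Eventually.of_forall fun x => by
      rw [← dist_eq_norm]
      exact ContinuousMap.dist_apply_le_dist x)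
  simpa using h

/-- if `T ∈ U ↦ φ_T` is a continuous assignment of constraints to maps of
`U ⊆ C⁰(X,X)`, then `Γ_U(T) = (φ_T)_*(M_T)` is upper semi-continuous: for `T ∈ U` and `ε > 0`
there is a neighborhood of `T` in `U` whose image under `Γ_U` consists of sets contained in
the open `ε`-neighborhood of `Γ_U(T)`. -/
theorem stmt6 {n : ℕ} (U : Set C(X, X))
    (Φ : C(X, X) → C(X, EuclideanSpace ℝ (Fin n))) (hΦ : ContinuousOn Φ U)
    (T : C(X, X)) (hT : T ∈ U) (ε : ℝ) (hε : 0 < ε) :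
    ∃ δ > 0, ∀ S ∈ U, dist S T < δ →
      rotv (⇑(Φ S)) '' MT (⇑S) ⊆ Metric.thickening ε (rotv (⇑(Φ T)) '' MT (⇑T)) := by
  by_contra hcon
  push_neg at hcon
  have hchoice : ∀ k : ℕ, ∃ S ∈ U, dist S T < 1 / ((k : ℝ) + 1) ∧
      ¬ (rotv (⇑(Φ S)) '' MT (⇑S) ⊆ Metric.thickening ε (rotv (⇑(Φ T)) '' MT (⇑T))) := by
    intro k
    exact hcon (1 / ((k : ℝ) + 1)) (by positivity)
  choose S hSU hSd hSP using hchoice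
  have hpts : ∀ k, ∃ a ∈ rotv (⇑(Φ (S k))) '' MT (⇑(S k)),
      a ∉ Metric.thickening ε (rotv (⇑(Φ T)) '' MT (⇑T)) := fun k => Set.not_subset.1 (hSP k)
  choose pt hptmem hptnot using hpts
  have hmeas : ∀ k, ∃ μ ∈ MT (⇑(S k)), rotv (⇑(Φ (S k))) μ = pt k := fun k => hptmem k
  choose μ hμMT hμrot using hmeas
  set 𝒰 : Ultrafilter ℕ := Ultrafilter.of atTop with h𝒰
  have h𝒰le : (𝒰 : Filter ℕ) ≤ atTop := Ultrafilter.of_le _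
  obtain ⟨ν, hν⟩ := exists_limit_measure 𝒰 μ
  -- S k → T
  have hds : Tendsto (fun k => dist (S k) T) atTop (𝓝 0) :=
    squeeze_zero (fun k => dist_nonneg) (fun k => (hSd k).le)
      tendsto_one_div_add_atTop_nhds_zero_nat
  have hS_tendsto : Tendsto S atTop (𝓝 T) := tendsto_iff_dist_tendsto_zero.2 hds
  have hΦS : Tendsto (fun k => Φ (S k)) atTop (𝓝 (Φ T)) := by
    have hwithin : Tendsto S atTop (𝓝[U] T) :=
      tendsto_nhdsWithin_iff.2 ⟨hS_tendsto, Filter.Eventually.of_forall hSU⟩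
    exact ((hΦ T hT).tendsto).comp hwithin
  -- key convergence of composed integrals
  have key : ∀ g : C(X, ℝ), Tendsto (fun k => ∫ x, g (T x) ∂(μ k : Measure X)) 𝒰
      (𝓝 (∫ x, g (T x) ∂(ν : Measure X))) := fun g =>
    hν ⟨fun x => g (T x), g.continuous.comp T.continuous⟩
  have hdiff : ∀ g : C(X, ℝ), Tendsto
      (fun k => (∫ x, g (S k x) ∂(μ k : Measure X)) - ∫ x, g (T x) ∂(μ k : Measure X))
      atTop (𝓝 0) := by
    intro g
    rw [NormedAddCommGroup.tendsto_nhds_zero]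
    intro η hη
    have hgu : UniformContinuous ⇑g := CompactSpace.uniformContinuous_of_continuous g.continuous
    obtain ⟨δ, hδ0, hδ⟩ := Metric.uniformContinuous_iff.1 hgu (η / 2) (by positivity)
    filter_upwards [hds.eventually (gt_mem_nhds hδ0)] with k hk
    have hint1 : Integrable (fun x => g (S k x)) (μ k : Measure X) :=
      contIntegrable ⟨fun x => g (S k x), g.continuous.comp (S k).continuous⟩ _
    have hint2 : Integrable (fun x => g (T x)) (μ k : Measure X) :=
      contIntegrable ⟨fun x => g (T x), g.continuous.comp T.continuous⟩ _
    rw [← integral_sub hint1 hint2]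
    have hb := norm_integral_le_of_norm_le_const (μ := (μ k : Measure X)) (C := η / 2)
      (f := fun x => g (S k x) - g (T x))
      (Filter.Eventually.of_forall fun x => by
        rw [← dist_eq_norm]
        exact (hδ (lt_of_le_of_lt (ContinuousMap.dist_apply_le_dist x) hk)).le)
    have : ‖∫ x, (g (S k x) - g (T x)) ∂(μ k : Measure X)‖ ≤ η / 2 := by simpa using hb
    linarith
  have keyS : ∀ g : C(X, ℝ), Tendsto (fun k => ∫ x, g (S k x) ∂(μ k : Measure X)) 𝒰
      (𝓝 (∫ x, g (T x) ∂(ν : Measure X))) := by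
    intro g
    have h := ((hdiff g).mono_left h𝒰le).add (key g)
    rw [zero_add] at h
    refine h.congr fun k => ?_
    ring
  have keyinv : ∀ g : C(X, ℝ), ∫ x, g (T x) ∂(ν : Measure X) = ∫ x, g x ∂(ν : Measure X) := by
    intro g
    have hSint : ∀ k, ∫ x, g (S k x) ∂(μ k : Measure X) = ∫ x, g x ∂(μ k : Measure X) := by
      intro k
      have hm := hμMT k
      calc ∫ x, g (S k x) ∂(μ k : Measure X)
          = ∫ y, g y ∂((μ k : Measure X).map (S k)) :=
            (integral_map (S k).continuous.measurable.aemeasurable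
              g.continuous.aestronglyMeasurable).symm
        _ = ∫ y, g y ∂(μ k : Measure X) := by rw [hm]
    have h1 : Tendsto (fun k => ∫ x, g x ∂(μ k : Measure X)) 𝒰
        (𝓝 (∫ x, g (T x) ∂(ν : Measure X))) := by
      refine (keyS g).congr fun k => hSint k
    exact tendsto_nhds_unique h1 (hν g)
  -- ν is T-invariant
  have hνMT : ν ∈ MT ⇑T := by
    show (ν : Measure X).map ⇑T = (ν : Measure X)
    have : IsProbabilityMeasure ((ν : Measure X).map ⇑T) :=
      Measure.isProbabilityMeasure_map T.continuous.measurable.aemeasurable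
    refine ext_of_forall_lintegral_eq_of_IsFiniteMeasure fun f => ?_
    have hfin1 : ∫⁻ x, (f x : ℝ≥0∞) ∂((ν : Measure X).map ⇑T) ≠ ⊤ :=
      (f.lintegral_lt_top_of_nnreal _).ne
    have hfin2 : ∫⁻ x, (f x : ℝ≥0∞) ∂(ν : Measure X) ≠ ⊤ :=
      (f.lintegral_lt_top_of_nnreal _).ne
    rw [← ENNReal.toReal_eq_toReal_iff' hfin1 hfin2]
    rw [toReal_lintegral_coe_eq_integral, toReal_lintegral_coe_eq_integral]
    set g : C(X, ℝ) := ⟨fun x => (f x : ℝ), NNReal.continuous_coe.comp f.continuous⟩ with hg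
    have e1 : ∫ x, (f x : ℝ) ∂((ν : Measure X).map ⇑T) = ∫ x, g (T x) ∂(ν : Measure X) :=
      integral_map T.continuous.measurable.aemeasurable
        (NNReal.continuous_coe.comp f.continuous).aestronglyMeasurable
    rw [e1]
    exact keyinv g
  -- rotation vectors converge
  have hrotT : Tendsto (fun k => rotv (⇑(Φ T)) (μ k)) 𝒰 (𝓝 (rotv (⇑(Φ T)) ν)) := by
    have hOne : ∀ (σ : ProbabilityMeasure X) (i : Fin n),
        EuclideanSpace.proj (𝕜 := ℝ) i (rotv (⇑(Φ T)) σ) = ∫ x, (Φ T) x i ∂(σ : Measure X) := by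
      intro σ i
      rw [rotv, ← ContinuousLinearMap.integral_comp_comm _ (contIntegrable (Φ T) _)]
      rfl
    have hcoord : ∀ i : Fin n, Tendsto (fun k => (rotv (⇑(Φ T)) (μ k)) i) 𝒰
        (𝓝 ((rotv (⇑(Φ T)) ν) i)) := by
      intro i
      have hc : Continuous fun x => (Φ T) x i :=
        (EuclideanSpace.proj (𝕜 := ℝ) i).continuous.comp (Φ T).continuous
      have h := hν ⟨fun x => (Φ T) x i, hc⟩
      simp only [ContinuousMap.coe_mk] at h
      have e1 : ∀ k, ∫ x, (Φ T) x i ∂(μ k : Measure X) = (rotv (⇑(Φ T)) (μ k)) i := by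
        intro k
        rw [← hOne (μ k) i]
        rfl
      have e2 : ∫ x, (Φ T) x i ∂(ν : Measure X) = (rotv (⇑(Φ T)) ν) i := by
        rw [← hOne ν i]
        rfl
      rw [e2] at h
      exact h.congr fun k => e1 k
    have hpi : Tendsto (fun k => (EuclideanSpace.equiv (Fin n) ℝ) (rotv (⇑(Φ T)) (μ k))) 𝒰
        (𝓝 ((EuclideanSpace.equiv (Fin n) ℝ) (rotv (⇑(Φ T)) ν))) :=
      tendsto_pi_nhds.2 fun i => hcoord i
    have h := ((EuclideanSpace.equiv (Fin n) ℝ).symm.continuous.tendsto _).comp hpi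
    have e : ∀ v, (EuclideanSpace.equiv (Fin n) ℝ).symm ((EuclideanSpace.equiv (Fin n) ℝ) v) = v :=
      fun v => by simp
    simp only [Function.comp_def, e] at h
    exact h
  have herr : Tendsto (fun k => rotv (⇑(Φ (S k))) (μ k) - rotv (⇑(Φ T)) (μ k)) atTop (𝓝 0) := by
    refine squeeze_zero_norm (fun k => rotv_dist_le (Φ (S k)) (Φ T) (μ k)) ?_
    exact tendsto_iff_dist_tendsto_zero.1 hΦS
  have hrot : Tendsto (fun k => rotv (⇑(Φ (S k))) (μ k)) 𝒰 (𝓝 (rotv (⇑(Φ T)) ν)) := by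
    have h := ((herr.mono_left h𝒰le).add hrotT)
    rw [zero_add] at h
    refine h.congr fun k => ?_
    abel
  -- conclude
  have hmemν : rotv (⇑(Φ T)) ν ∈ rotv (⇑(Φ T)) '' MT ⇑T := ⟨ν, hνMT, rfl⟩
  have hthick : rotv (⇑(Φ T)) ν ∈ Metric.thickening ε (rotv (⇑(Φ T)) '' MT ⇑T) :=
    Metric.self_subset_thickening hε _ hmemν
  have hcompl : rotv (⇑(Φ T)) ν ∈ (Metric.thickening ε (rotv (⇑(Φ T)) '' MT ⇑T))ᶜ := by
    refine (Metric.isOpen_thickening.isClosed_compl).mem_of_tendsto hrot ?_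
    refine Filter.Eventually.of_forall fun k => ?_
    rw [hμrot k]
    exact hptnot k
  exact hcompl hthick
end

section
/- Fix a continuous potential A : X → ℝ and a constraint φ ∈ C⁰(X,ℝ^n), and take h ∈ φ_*(M_T). Let {φ_j} be a sequence of constraints converging uniformly to φ, and let {h_j} ⊂ ℝ^n be a sequence satisfying h_j ∈ (φ_j)_*(m_{A,φ}(h)) for each j. Then lim_{j→∞} β_{A,φ_j}(h_j) = β_{A,φ}(h). -/
open MeasureTheory Filter Topology Metric Set
open BoundedContinuousFunction
open scoped ENNReal NNReal

variable {X : Type*} [MetricSpace X] [CompactSpace X] [MeasurableSpace X] [BorelSpace X]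

section aux

lemma sumclamp (ε : ℝ) (hε : 0 < ε) (a : ℝ) (N : ℕ) :
    ∑ i ∈ Finset.range N, min (max (a - i*ε) 0) ε = min (max a 0) (N*ε) := by
  induction N with
  | zero => simp
  | succ N ih =>
    rw [Finset.sum_range_succ, ih]
    have hNε : (0:ℝ) ≤ N*ε := by positivity
    push_cast
    rcases le_total a (N*ε) with hle | hge
    · have h1 : min (max (a - N*ε) 0) ε = 0 := by
        rw [max_eq_right (by linarith), min_eq_left hε.le]
      rw [h1, add_zero]
      rcases le_total a 0 with h2 | h2
      · rw [max_eq_right h2, min_eq_left hNε, min_eq_left (by nlinarith)]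
      · rw [max_eq_left h2, min_eq_left hle, min_eq_left (by nlinarith)]
    · have h0 : (0:ℝ) ≤ a := le_trans hNε hge
      rw [max_eq_left h0, max_eq_left (show (0:ℝ) ≤ a - ↑N*ε by linarith), min_eq_right hge]
      rcases le_total a ((N+1)*ε) with h3 | h3
      · rw [min_eq_left (by nlinarith), min_eq_left h3]; ring
      · rw [min_eq_right (by nlinarith), min_eq_right h3]; ring


variable {X : Type*} [MetricSpace X] [CompactSpace X] [MeasurableSpace X] [BorelSpace X]

theorem probMeasure_compactSpace : CompactSpace (ProbabilityMeasure X) := by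
  constructor
  rw [isCompact_iff_ultrafilter_le_nhds]
  intro F _hF
  -- the limit functional
  have hex : ∀ f : X →ᵇ ℝ, ∃ r : ℝ,
      Tendsto (fun μ : ProbabilityMeasure X => ∫ x, f x ∂(μ : Measure X)) F (𝓝 r) := by
    intro f
    have hmem : ↑(F.map (fun μ : ProbabilityMeasure X => ∫ x, f x ∂(μ : Measure X)))
        ≤ 𝓟 (Set.Icc (-‖f‖) ‖f‖) := by
      rw [Ultrafilter.coe_map, Filter.le_principal_iff]
      refine Filter.mem_map.2 (Filter.univ_mem' fun μ => ?_)
      exact abs_le.1 (by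
        simpa using norm_integral_le_of_norm_le_const (μ := (μ : Measure X))
          (f := fun x => f x) (C := ‖f‖) (Eventually.of_forall fun x => f.norm_coe_le_norm x))
    obtain ⟨r, -, hr⟩ := (isCompact_Icc (a := -‖f‖) (b := ‖f‖)).ultrafilter_le_nhds
      (F.map (fun μ : ProbabilityMeasure X => ∫ x, f x ∂(μ : Measure X))) hmem
    exact ⟨r, hr⟩
  choose L hL using hex
  -- basic properties of L
  have L_const : ∀ c : ℝ, L (BoundedContinuousFunction.const X c) = c := by
    intro c
    refine tendsto_nhds_unique (hL _) ?_
    simpa [integral_const] using tendsto_const_nhds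
  have L_add : ∀ f g : X →ᵇ ℝ, L (f + g) = L f + L g := by
    intro f g
    refine tendsto_nhds_unique (hL _) ?_
    have : ∀ μ : ProbabilityMeasure X, ∫ x, (f + g) x ∂(μ : Measure X)
        = (∫ x, f x ∂(μ : Measure X)) + ∫ x, g x ∂(μ : Measure X) := by
      intro μ
      simpa using integral_add (f.integrable _) (g.integrable _)
    simp only [this]
    exact ((hL f).add (hL g))
  have L_smul : ∀ (c : ℝ) (f : X →ᵇ ℝ), L (c • f) = c * L f := by
    intro c f
    refine tendsto_nhds_unique (hL _) ?_
    have : ∀ μ : ProbabilityMeasure X, ∫ x, (c • f) x ∂(μ : Measure X)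
        = c * ∫ x, f x ∂(μ : Measure X) := by
      intro μ
      simpa using integral_smul (μ := (μ : Measure X)) c (fun x => f x)
    simp only [this]
    exact (hL f).const_mul c
  have L_mono : ∀ f g : X →ᵇ ℝ, (∀ x, f x ≤ g x) → L f ≤ L g := by
    intro f g hfg
    refine le_of_tendsto_of_tendsto (hL f) (hL g) (Eventually.of_forall fun μ => ?_)
    exact integral_mono (f.integrable _) (g.integrable _) hfg
  have L_nonneg : ∀ f : X →ᵇ ℝ, (∀ x, 0 ≤ f x) → 0 ≤ L f := by
    intro f hf
    have := L_mono (BoundedContinuousFunction.const X 0) f (by simpa using hf)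
    simpa [L_const] using this
  classical
  -- the content
  set tests : Set X → Set (X →ᵇ ℝ) := fun K => {f | (∀ x, 0 ≤ f x) ∧ ∀ x ∈ K, 1 ≤ f x}
    with htests
  have one_mem : ∀ K : Set X, (BoundedContinuousFunction.const X (1:ℝ)) ∈ tests K := by
    intro K
    exact ⟨fun x => by norm_num, fun x _ => by norm_num⟩
  have T_nonempty : ∀ K : Set X, (L '' tests K).Nonempty :=
    fun K => ⟨_, ⟨_, one_mem K, rfl⟩⟩
  have T_bdd : ∀ K : Set X, BddBelow (L '' tests K) := by
    rintro K
    refine ⟨0, ?_⟩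
    rintro r ⟨f, hf, rfl⟩
    exact L_nonneg f hf.1
  set Λ : Set X → ℝ := fun K => sInf (L '' tests K) with hΛ
  have Λ_le : ∀ (K : Set X) (f : X →ᵇ ℝ), f ∈ tests K → Λ K ≤ L f :=
    fun K f hf => csInf_le (T_bdd K) ⟨f, hf, rfl⟩
  have Λ_nonneg : ∀ K : Set X, 0 ≤ Λ K :=
    fun K => le_csInf (T_nonempty K) (by rintro r ⟨f, hf, rfl⟩; exact L_nonneg f hf.1)
  have Λ_mono : ∀ K1 K2 : Set X, K1 ⊆ K2 → Λ K1 ≤ Λ K2 := by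
    intro K1 K2 hsub
    refine csInf_le_csInf (T_bdd K1) (T_nonempty K2) ?_
    rintro r ⟨f, ⟨hf0, hf1⟩, rfl⟩
    exact ⟨f, ⟨hf0, fun x hx => hf1 x (hsub hx)⟩, rfl⟩
  have Λ_subadd : ∀ K1 K2 : Set X, Λ (K1 ∪ K2) ≤ Λ K1 + Λ K2 := by
    intro K1 K2
    refine le_of_forall_pos_le_add fun ε hε => ?_
    obtain ⟨r1, ⟨f1, hf1, rfl⟩, hr1⟩ := exists_lt_of_csInf_lt (T_nonempty K1)
      (show Λ K1 < Λ K1 + ε/2 by linarith)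
    obtain ⟨r2, ⟨f2, hf2, rfl⟩, hr2⟩ := exists_lt_of_csInf_lt (T_nonempty K2)
      (show Λ K2 < Λ K2 + ε/2 by linarith)
    have hmem : f1 + f2 ∈ tests (K1 ∪ K2) := by
      constructor
      · intro x
        exact add_nonneg (hf1.1 x) (hf2.1 x)
      · rintro x (hx | hx)
        · have := hf1.2 x hx
          have := hf2.1 x
          simp only [BoundedContinuousFunction.coe_add, Pi.add_apply]
          linarith
        · have := hf2.2 x hx
          have := hf1.1 x
          simp only [BoundedContinuousFunction.coe_add, Pi.add_apply]
          linarith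
    calc Λ (K1 ∪ K2) ≤ L (f1 + f2) := Λ_le _ _ hmem
    _ = L f1 + L f2 := L_add _ _
    _ ≤ Λ K1 + ε/2 + (Λ K2 + ε/2) := by linarith
    _ = Λ K1 + Λ K2 + ε := by ring
  have Λ_superadd : ∀ K1 K2 : Set X, IsCompact K1 → IsCompact K2 → Disjoint K1 K2 →
      Λ K1 + Λ K2 ≤ Λ (K1 ∪ K2) := by
    intro K1 K2 hK1 hK2 hd
    refine le_csInf (T_nonempty _) ?_
    rintro r ⟨f, ⟨hf0, hf1⟩, rfl⟩
    obtain ⟨u, hu0, hu1, hu01⟩ := exists_continuous_zero_one_of_isCompact hK2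
      hK1.isClosed hd.symm
    set u' : X →ᵇ ℝ := mkOfCompact u with hu'
    have hu'app : ∀ x, u' x = u x := fun x => rfl
    have h1 : Λ K1 ≤ L (f * u') := by
      refine Λ_le _ _ ⟨fun x => mul_nonneg (hf0 x) ?_, fun x hx => ?_⟩
      · exact (hu01 x).1
      · have h1x : u' x = 1 := hu1 hx
        have := hf1 x (Or.inl hx)
        simp only [BoundedContinuousFunction.coe_mul, Pi.mul_apply, h1x, mul_one]
        exact this
    have h2 : Λ K2 ≤ L (f * (BoundedContinuousFunction.const X 1 - u')) := by
      refine Λ_le _ _ ⟨fun x => mul_nonneg (hf0 x) ?_, fun x hx => ?_⟩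
      · simp only [BoundedContinuousFunction.coe_sub, Pi.sub_apply,
          BoundedContinuousFunction.const_apply, Function.const_apply]
        have := (hu01 x).2
        rw [hu'app]
        linarith
      · have h0x : u' x = 0 := hu0 hx
        have := hf1 x (Or.inr hx)
        simp only [BoundedContinuousFunction.coe_mul, Pi.mul_apply,
          BoundedContinuousFunction.coe_sub, Pi.sub_apply,
          BoundedContinuousFunction.const_apply, h0x, sub_zero, mul_one]
        exact this
    have hsplit : f * u' + f * (BoundedContinuousFunction.const X 1 - u') = f := by
      ext x
      simp only [BoundedContinuousFunction.coe_add, BoundedContinuousFunction.coe_mul,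
        BoundedContinuousFunction.coe_sub, BoundedContinuousFunction.const_apply,
        Pi.add_apply, Pi.mul_apply, Pi.sub_apply]
      ring
    calc Λ K1 + Λ K2 ≤ L (f * u') + L (f * (BoundedContinuousFunction.const X 1 - u')) :=
          add_le_add h1 h2
    _ = L (f * u' + f * (BoundedContinuousFunction.const X 1 - u')) := (L_add _ _).symm
    _ = L f := by rw [hsplit]
  -- the content and its measure
  set κ : Content X :=
    { toFun := fun K => Real.toNNReal (Λ (K : Set X))
      mono' := fun K1 K2 h => Real.toNNReal_mono (Λ_mono _ _ h)
      sup_disjoint' := by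
        intro K1 K2 hd _ _
        have he : Λ ((K1 ⊔ K2 : TopologicalSpace.Compacts X) : Set X) = Λ K1 + Λ K2 := by
          refine le_antisymm ?_ ?_
          · simpa using Λ_subadd K1 K2
          · simpa using Λ_superadd _ _ K1.2 K2.2 hd
        simp only [he]
        exact Real.toNNReal_add (Λ_nonneg _) (Λ_nonneg _)
      sup_le' := by
        intro K1 K2
        rw [← Real.toNNReal_add (Λ_nonneg _) (Λ_nonneg _)]
        refine Real.toNNReal_mono ?_
        simpa using Λ_subadd K1 K2 } with hκ
  set μ0 : Measure X := κ.measure with hμ0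
  have measOpen : ∀ (U : Set X) (hU : IsOpen U), μ0 U = κ.innerContent ⟨U, hU⟩ := by
    intro U hU
    rw [hμ0, Content.measure_apply _ hU.measurableSet,
      Content.outerMeasure_of_isOpen (μ := κ) U hU]
  have meas_open_le : ∀ (U : Set X) (hU : IsOpen U) (g : X →ᵇ ℝ), (∀ x, 0 ≤ g x) →
      (∀ x ∈ U, 1 ≤ g x) → μ0 U ≤ ENNReal.ofReal (L g) := by
    intro U hU g hg0 hg1
    rw [measOpen U hU]
    refine iSup₂_le fun K hK => ?_
    have : Λ (K : Set X) ≤ L g := Λ_le _ g ⟨hg0, fun x hx => hg1 x (hK hx)⟩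
    exact ENNReal.coe_le_coe.2 (Real.toNNReal_mono this)
  have probμ0 : μ0 Set.univ = 1 := by
    refine le_antisymm ?_ ?_
    · have := meas_open_le Set.univ isOpen_univ (BoundedContinuousFunction.const X 1)
        (fun x => by norm_num) (fun x _ => by norm_num)
      simpa [L_const] using this
    · have h1 : (1:ℝ) ≤ Λ Set.univ := by
        refine le_csInf (T_nonempty _) ?_
        rintro r ⟨f, ⟨hf0, hf1⟩, rfl⟩
        have := L_mono (BoundedContinuousFunction.const X 1) f (fun x => by
          simpa using hf1 x (Set.mem_univ x))
        simpa [L_const] using this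
      have h2 : (1:ℝ≥0∞) ≤ (Real.toNNReal (Λ Set.univ) : ℝ≥0∞) := by
        rw [← ENNReal.ofReal_one]
        exact ENNReal.ofReal_le_ofReal h1
      refine le_trans h2 ?_
      rw [measOpen Set.univ isOpen_univ]
      exact Content.le_innerContent _ ⟨Set.univ, isCompact_univ⟩ _ (by simp)
  haveI instμ0 : IsProbabilityMeasure μ0 := ⟨probμ0⟩
  -- integral inequality
  have L_zero : L 0 = 0 := by
    have := L_add 0 0
    simpa using this.symm
  have L_sum : ∀ (M : ℕ) (g : ℕ → (X →ᵇ ℝ)),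
      L (∑ i ∈ Finset.range M, g i) = ∑ i ∈ Finset.range M, L (g i) := by
    intro M g
    induction M with
    | zero => simpa using L_zero
    | succ M ih => rw [Finset.sum_range_succ, Finset.sum_range_succ, L_add, ih]
  have fx_le : ∀ (f : X →ᵇ ℝ) (x : X), f x ≤ ‖f‖ :=
    fun f x => (abs_le.1 (by simpa [Real.norm_eq_abs] using f.norm_coe_le_norm x)).2
  have fx_ge : ∀ (f : X →ᵇ ℝ) (x : X), -‖f‖ ≤ f x :=
    fun f x => (abs_le.1 (by simpa [Real.norm_eq_abs] using f.norm_coe_le_norm x)).1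
  have intle : ∀ f : X →ᵇ ℝ, (∀ x, 0 ≤ f x) → ∫ x, f x ∂μ0 ≤ L f := by
    intro f hf0
    refine le_of_forall_pos_le_add fun ε hε => ?_
    obtain ⟨N0, hN0⟩ := exists_nat_ge (‖f‖ / ε)
    set N := N0 + 1 with hN
    have hNf : ‖f‖ ≤ N * ε := by
      rw [div_le_iff₀ hε] at hN0
      have h1 : (N0:ℝ) * ε ≤ N * ε := by
        have : (N0:ℝ) ≤ N := by rw [hN]; push_cast; linarith
        nlinarith
      linarith
    set c : ℕ → (X →ᵇ ℝ) := fun i => mkOfCompact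
      ⟨fun x => min (max (f x - i*ε) 0) ε,
        ((f.continuous.sub continuous_const).max continuous_const).min continuous_const⟩
      with hc
    have hcapp : ∀ (i : ℕ) (x : X), c i x = min (max (f x - i*ε) 0) ε := fun i x => rfl
    have hc0 : ∀ (i : ℕ) (x : X), 0 ≤ c i x := by
      intro i x
      rw [hcapp]
      exact le_min (le_max_right _ _) hε.le
    have csum : ∀ x, ∑ i ∈ Finset.range N, c i x = f x := by
      intro x
      have := sumclamp ε hε (f x) N
      simp only [hcapp]
      rw [this, max_eq_left (hf0 x), min_eq_left (le_trans (fx_le f x) hNf)]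
    set Ui : ℕ → Set X := fun i => {x | (i:ℝ)*ε < f x} with hUi
    have hUopen : ∀ i, IsOpen (Ui i) := fun i => isOpen_lt continuous_const f.continuous
    have intci : ∀ i : ℕ, ∫ x, c i x ∂μ0 ≤ ε * (μ0 (Ui i)).toReal := by
      intro i
      have hle : ∀ x, c i x ≤ (Ui i).indicator (fun _ => ε) x := by
        intro x
        by_cases hx : x ∈ Ui i
        · rw [Set.indicator_of_mem hx, hcapp]
          exact min_le_right _ _
        · rw [Set.indicator_of_notMem hx, hcapp]
          have : f x ≤ i*ε := le_of_not_gt hx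
          rw [max_eq_right (by linarith), min_eq_left hε.le]
      have hint : Integrable ((Ui i).indicator (fun _ => ε)) μ0 :=
        (integrable_indicator_iff (hUopen i).measurableSet).2
          (integrableOn_const (measure_ne_top _ _))
      calc ∫ x, c i x ∂μ0 ≤ ∫ x, (Ui i).indicator (fun _ => ε) x ∂μ0 :=
            integral_mono ((c i).integrable μ0) hint hle
      _ = (μ0 (Ui i)).toReal • ε := integral_indicator_const ε (hUopen i).measurableSet
      _ = ε * (μ0 (Ui i)).toReal := by rw [smul_eq_mul, mul_comm]
    have hshift : ∀ i : ℕ, ε * (μ0 (Ui (i+1))).toReal ≤ L (c i) := by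
      intro i
      have htest : ∀ x ∈ Ui (i+1), 1 ≤ (ε⁻¹ • c i) x := by
        intro x hx
        have hx' : ((i:ℝ)+1)*ε < f x := by
          have : x ∈ {x | ((i+1:ℕ):ℝ)*ε < f x} := hx
          push_cast at this
          exact this
        have hci : c i x = ε := by
          rw [hcapp, max_eq_left (by nlinarith), min_eq_right (by nlinarith)]
        simp only [BoundedContinuousFunction.coe_smul, Pi.smul_apply, smul_eq_mul, hci]
        rw [inv_mul_cancel₀ hε.ne']
      have hU : μ0 (Ui (i+1)) ≤ ENNReal.ofReal (L (ε⁻¹ • c i)) :=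
        meas_open_le _ (hUopen (i+1)) _
          (fun x => by
            simp only [BoundedContinuousFunction.coe_smul, Pi.smul_apply, smul_eq_mul]
            exact mul_nonneg (inv_nonneg.2 hε.le) (hc0 i x)) htest
      have hUr : (μ0 (Ui (i+1))).toReal ≤ L (ε⁻¹ • c i) := by
        have := ENNReal.toReal_mono ENNReal.ofReal_ne_top hU
        rwa [ENNReal.toReal_ofReal (L_nonneg _ (fun x => by
          simp only [BoundedContinuousFunction.coe_smul, Pi.smul_apply, smul_eq_mul]
          exact mul_nonneg (inv_nonneg.2 hε.le) (hc0 i x)))] at this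
      calc ε * (μ0 (Ui (i+1))).toReal ≤ ε * L (ε⁻¹ • c i) := by nlinarith
      _ = L (ε • ε⁻¹ • c i) := (L_smul _ _).symm
      _ = L (c i) := by rw [smul_smul, mul_inv_cancel₀ hε.ne', one_smul]
    have hzero : ε * (μ0 (Ui 0)).toReal ≤ ε := by
      have h1 : (μ0 (Ui 0)).toReal ≤ 1 := by
        have := ENNReal.toReal_mono ENNReal.one_ne_top (prob_le_one (μ := μ0) (s := Ui 0))
        simpa using this
      nlinarith
    have hintf : ∫ x, f x ∂μ0 = ∑ i ∈ Finset.range N, ∫ x, c i x ∂μ0 := by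
      rw [← integral_finset_sum _ (fun i _ => (c i).integrable μ0)]
      refine integral_congr_ae (Eventually.of_forall fun x => ?_)
      exact (csum x).symm
    calc ∫ x, f x ∂μ0 = ∑ i ∈ Finset.range N, ∫ x, c i x ∂μ0 := hintf
    _ ≤ ∑ i ∈ Finset.range N, ε * (μ0 (Ui i)).toReal :=
        Finset.sum_le_sum fun i _ => intci i
    _ = (∑ i ∈ Finset.range N0, ε * (μ0 (Ui (i+1))).toReal) + ε * (μ0 (Ui 0)).toReal :=
        Finset.sum_range_succ' _ N0
    _ ≤ (∑ i ∈ Finset.range N0, L (c i)) + ε :=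
        add_le_add (Finset.sum_le_sum fun i _ => hshift i) hzero
    _ = L (∑ i ∈ Finset.range N0, c i) + ε := by rw [L_sum]
    _ ≤ L f + ε := by
        refine add_le_add_left (L_mono _ _ ?_) ε
        intro x
        have h2 : (∑ i ∈ Finset.range N0, c i) x = ∑ i ∈ Finset.range N0, c i x := by
          rw [BoundedContinuousFunction.coe_sum]
          simp
        rw [h2]
        simp only [hcapp]
        rw [sumclamp ε hε (f x) N0, max_eq_left (hf0 x)]
        exact le_trans (min_le_left _ _) (le_of_eq rfl)
  -- representation
  have key : ∀ f : X →ᵇ ℝ, ∫ x, f x ∂μ0 = L f := by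
    intro f
    have hnn1 : ∀ x, 0 ≤ (f + BoundedContinuousFunction.const X ‖f‖) x := by
      intro x
      have := fx_ge f x
      simp only [BoundedContinuousFunction.coe_add, Pi.add_apply,
        BoundedContinuousFunction.const_apply]
      linarith
    have hnn2 : ∀ x, 0 ≤ (BoundedContinuousFunction.const X ‖f‖ - f) x := by
      intro x
      have := fx_le f x
      simp only [BoundedContinuousFunction.coe_sub, Pi.sub_apply,
        BoundedContinuousFunction.const_apply]
      linarith
    have h1 := intle _ hnn1
    have h2 := intle _ hnn2
    have e1 : ∫ x, (f + BoundedContinuousFunction.const X ‖f‖) x ∂μ0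
        = (∫ x, f x ∂μ0) + ‖f‖ := by
      simp only [BoundedContinuousFunction.coe_add, Pi.add_apply,
        BoundedContinuousFunction.const_apply]
      rw [integral_add (f.integrable μ0) (integrable_const _), integral_const]
      simp
    have e2 : ∫ x, (BoundedContinuousFunction.const X ‖f‖ - f) x ∂μ0
        = ‖f‖ - ∫ x, f x ∂μ0 := by
      simp only [BoundedContinuousFunction.coe_sub, Pi.sub_apply,
        BoundedContinuousFunction.const_apply]
      rw [integral_sub (integrable_const _) (f.integrable μ0), integral_const]
      simp
    have l1 : L (f + BoundedContinuousFunction.const X ‖f‖) = L f + ‖f‖ := by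
      rw [L_add, L_const]
    have l2 : L (BoundedContinuousFunction.const X ‖f‖ - f) = ‖f‖ - L f := by
      have hsf : (BoundedContinuousFunction.const X ‖f‖ - f) + f
          = BoundedContinuousFunction.const X ‖f‖ := by
        ext x
        simp
      have := L_add (BoundedContinuousFunction.const X ‖f‖ - f) f
      rw [hsf, L_const] at this
      linarith
    rw [e1, l1] at h1
    rw [e2, l2] at h2
    linarith
  -- conclusion
  refine ⟨⟨μ0, instμ0⟩, Set.mem_univ _, ?_⟩
  have htend : Tendsto (id : ProbabilityMeasure X → ProbabilityMeasure X) F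
      (𝓝 (⟨μ0, instμ0⟩ : ProbabilityMeasure X)) := by
    refine ProbabilityMeasure.tendsto_iff_forall_integral_tendsto.2 ?_
    intro f
    show Tendsto (fun μ : ProbabilityMeasure X => ∫ x, f x ∂(μ : Measure X)) ↑F
      (𝓝 (∫ x, f x ∂(((⟨μ0, instμ0⟩ : ProbabilityMeasure X)) : Measure X)))
    have : ∫ x, f x ∂(((⟨μ0, instμ0⟩ : ProbabilityMeasure X)) : Measure X) = L f := key f
    rw [this]
    exact hL f
  exact Filter.tendsto_id'.1 htend

section helpers

variable {n : ℕ}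

lemma integrable_contMap (φ : C(X, EuclideanSpace ℝ (Fin n))) (μ : ProbabilityMeasure X) :
    Integrable (⇑φ) (μ : Measure X) := by
  have := (mkOfCompact φ).integrable (μ : Measure X)
  exact this

lemma rotv_continuous (φ : C(X, EuclideanSpace ℝ (Fin n))) :
    Continuous fun μ : ProbabilityMeasure X => rotv (⇑φ) μ := by
  have hcomp : ∀ (i : Fin n) (μ : ProbabilityMeasure X),
      rotv (⇑φ) μ i = ∫ x, φ x i ∂(μ : Measure X) := by
    intro i μ
    have := (EuclideanSpace.proj (𝕜 := ℝ) (ι := Fin n) i).integral_comp_comm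
      (integrable_contMap φ μ)
    simpa [rotv] using this.symm
  have hpi : Continuous fun μ : ProbabilityMeasure X =>
      (fun i => ∫ x, φ x i ∂(μ : Measure X) : Fin n → ℝ) := by
    refine continuous_pi fun i => ?_
    have hcont : Continuous fun x : X => φ x i :=
      (EuclideanSpace.proj (𝕜 := ℝ) (ι := Fin n) i).continuous.comp φ.continuous
    have := ProbabilityMeasure.continuous_integral_boundedContinuousFunction
      (X := X) (mkOfCompact ⟨fun x => φ x i, hcont⟩)
    simpa using this
  have : Continuous fun μ : ProbabilityMeasure X =>
      (EuclideanSpace.equiv (Fin n) ℝ).symm (fun i => ∫ x, φ x i ∂(μ : Measure X)) :=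
    (EuclideanSpace.equiv (Fin n) ℝ).symm.continuous.comp hpi
  convert this using 2 with μ
  apply (EuclideanSpace.equiv (Fin n) ℝ).injective
  rw [ContinuousLinearEquiv.apply_symm_apply]
  funext i
  exact hcomp i _

lemma intA_eq_bcf (A : C(X, ℝ)) (μ : ProbabilityMeasure X) :
    intA (⇑A) μ = ∫ x, (mkOfCompact A) x ∂(μ : Measure X) := rfl

lemma intA_continuous (A : C(X, ℝ)) :
    Continuous fun μ : ProbabilityMeasure X => intA (⇑A) μ := by
  have := ProbabilityMeasure.continuous_integral_boundedContinuousFunction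
    (X := X) (mkOfCompact A)
  simpa [intA] using this

lemma intA_le_norm (A : C(X, ℝ)) (μ : ProbabilityMeasure X) :
    |intA (⇑A) μ| ≤ ‖mkOfCompact A‖ := by
  rw [intA_eq_bcf]
  exact abs_le.2 (abs_le.1 (by
    simpa using norm_integral_le_of_norm_le_const (μ := (μ : Measure X))
      (f := fun x => (mkOfCompact A) x) (C := ‖mkOfCompact A‖)
      (Eventually.of_forall fun x => (mkOfCompact A).norm_coe_le_norm x)))

lemma rotv_sub_le (φ ψ : C(X, EuclideanSpace ℝ (Fin n))) (μ : ProbabilityMeasure X) :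
    ‖rotv (⇑φ) μ - rotv (⇑ψ) μ‖ ≤ dist φ ψ := by
  have hsub : rotv (⇑φ) μ - rotv (⇑ψ) μ = ∫ x, (φ x - ψ x) ∂(μ : Measure X) := by
    rw [rotv, rotv, ← integral_sub (integrable_contMap φ μ) (integrable_contMap ψ μ)]
  rw [hsub]
  have := norm_integral_le_of_norm_le_const (μ := (μ : Measure X))
    (f := fun x => φ x - ψ x) (C := dist φ ψ)
    (Eventually.of_forall fun x => by
      rw [← dist_eq_norm]
      exact ContinuousMap.dist_apply_le_dist x)
  simpa using this

lemma MT_isClosed (T : X → X) (hT : Continuous T) : IsClosed (MT (X := X) T) := by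
  have : MT (X := X) T = {μ : ProbabilityMeasure X |
      μ.map hT.measurable.aemeasurable = μ} := by
    ext μ
    constructor
    · intro hμ
      apply ProbabilityMeasure.toMeasure_injective
      rw [ProbabilityMeasure.toMeasure_map]
      exact hμ
    · intro hμ
      have := congrArg (ProbabilityMeasure.toMeasure) hμ
      rwa [ProbabilityMeasure.toMeasure_map] at this
  rw [this]
  exact isClosed_eq (ProbabilityMeasure.continuous_map hT) continuous_id

lemma MT_isCompact (T : X → X) (hT : Continuous T) : IsCompact (MT (X := X) T) := by
  haveI := probMeasure_compactSpace (X := X)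
  exact (MT_isClosed T hT).isCompact

end helpers

end aux

/-- if `φ_j → φ` uniformly, `h ∈ φ_*(M_T)` and `h_j ∈ (φ_j)_*(m_{A,φ}(h))`
for each `j`, then `β_{A,φ_j}(h_j) → β_{A,φ}(h)`. -/
theorem stmt9 {n : ℕ} (T : X → X) (hT : Continuous T) (A : X → ℝ) (hA : Continuous A)
    (φ : C(X, EuclideanSpace ℝ (Fin n))) (φseq : ℕ → C(X, EuclideanSpace ℝ (Fin n)))
    (hconv : Tendsto φseq atTop (𝓝 φ))
    (h : EuclideanSpace ℝ (Fin n)) (hh : h ∈ rotv (⇑φ) '' MT T)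
    (hseq : ℕ → EuclideanSpace ℝ (Fin n))
    (hhj : ∀ j, hseq j ∈ rotv (⇑(φseq j)) '' mset T A (⇑φ) h) :
    Tendsto (fun j => betaFn T A (⇑(φseq j)) (hseq j)) atTop (𝓝 (betaFn T A (⇑φ) h)) := by
  classical
  set Ac : C(X, ℝ) := ⟨A, hA⟩ with hAc
  have hAco : ⇑Ac = A := rfl
  choose μs hμs hrot using hhj
  set β := betaFn T A (⇑φ) h with hβ
  have hbdd : ∀ (ψ : X → EuclideanSpace ℝ (Fin n)) (h' : EuclideanSpace ℝ (Fin n)),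
      BddAbove (intA A '' {μ ∈ MT T | rotv ψ μ = h'}) := by
    intro ψ h'
    refine ⟨‖mkOfCompact Ac‖, ?_⟩
    rintro r ⟨μ, -, rfl⟩
    have := (abs_le.1 (intA_le_norm Ac μ)).2
    rwa [hAco] at this
  have hmem : ∀ j, intA A (μs j) ∈ intA A '' {μ ∈ MT T | rotv (⇑(φseq j)) μ = hseq j} :=
    fun j => ⟨μs j, ⟨(hμs j).1, hrot j⟩, rfl⟩
  have hμsβ : ∀ j, intA A (μs j) = β := fun j => (hμs j).2.2
  have lower : ∀ j, β ≤ betaFn T A (⇑(φseq j)) (hseq j) := by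
    intro j
    rw [← hμsβ j]
    exact le_csSup (hbdd _ _) (hmem j)
  have upper : ∀ ε > 0, ∀ᶠ j in atTop, betaFn T A (⇑(φseq j)) (hseq j) ≤ β + ε := by
    intro ε hε
    set U : Set (ProbabilityMeasure X) := {ν | intA A ν < β + ε} with hU
    have hUopen : IsOpen U := by
      have := intA_continuous Ac
      rw [hAco] at this
      exact isOpen_lt this continuous_const
    set K := MT T \ U with hK
    have hKcomp : IsCompact K := (MT_isCompact T hT).diff hUopen
    have hδex : ∃ δ > 0, ∀ ν ∈ MT T, ‖rotv (⇑φ) ν - h‖ < δ → ν ∈ U := by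
      rcases eq_empty_or_nonempty K with hKe | hKne
      · refine ⟨1, one_pos, fun ν hν _ => ?_⟩
        by_contra hνU
        have : ν ∈ K := ⟨hν, hνU⟩
        rw [hKe] at this
        exact absurd this (notMem_empty ν)
      · have hg : Continuous fun ν : ProbabilityMeasure X => ‖rotv (⇑φ) ν - h‖ :=
          ((rotv_continuous φ).sub continuous_const).norm
        obtain ⟨ν0, hν0K, hmin⟩ := hKcomp.exists_isMinOn hKne hg.continuousOn
        refine ⟨‖rotv (⇑φ) ν0 - h‖, ?_, ?_⟩
        · rcases (norm_nonneg (rotv (⇑φ) ν0 - h)).lt_or_eq with hlt | heq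
          · exact hlt
          · exfalso
            have hr0 : rotv (⇑φ) ν0 = h := by
              have := heq.symm
              rw [norm_eq_zero, sub_eq_zero] at this
              exact this
            have hle : intA A ν0 ≤ β :=
              le_csSup (hbdd (⇑φ) h) ⟨ν0, ⟨hν0K.1, hr0⟩, rfl⟩
            have : ¬ (intA A ν0 < β + ε) := hν0K.2
            linarith
        · intro ν hν hlt
          by_contra hνU
          have hmem2 : ν ∈ K := ⟨hν, hνU⟩
          exact absurd (hmin hmem2) (not_le.2 hlt)
    obtain ⟨δ, hδpos, hδprop⟩ := hδex
    have hev : ∀ᶠ j in atTop, dist (φseq j) φ < δ/3 :=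
      Metric.tendsto_nhds.mp hconv (δ/3) (by positivity)
    filter_upwards [hev] with j hj
    refine csSup_le ⟨_, hmem j⟩ ?_
    rintro r ⟨ν, ⟨hνMT, hνrot⟩, rfl⟩
    have e1 : ‖rotv (⇑φ) ν - rotv (⇑(φseq j)) ν‖ ≤ dist φ (φseq j) := rotv_sub_le φ (φseq j) ν
    have e2 : ‖hseq j - h‖ ≤ dist (φseq j) φ := by
      rw [← hrot j]
      have h2 : h = rotv (⇑φ) (μs j) := ((hμs j).2.1).symm
      rw [h2]
      exact rotv_sub_le (φseq j) φ (μs j)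
    have hsplit : rotv (⇑φ) ν - h = (rotv (⇑φ) ν - rotv (⇑(φseq j)) ν) + (hseq j - h) := by
      rw [← hνrot]
      abel
    have h1 : ‖rotv (⇑φ) ν - h‖ < δ := by
      rw [hsplit]
      have := norm_add_le (rotv (⇑φ) ν - rotv (⇑(φseq j)) ν) (hseq j - h)
      rw [dist_comm] at e1
      linarith
    exact le_of_lt (hδprop ν hνMT h1)
  rw [Metric.tendsto_nhds]
  intro ε hε
  filter_upwards [upper (ε/2) (by positivity)] with j hj
  have hl := lower j
  rw [Real.dist_eq, abs_lt]
  constructor <;> linarith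
end

section
/- Fix a continuous potential A : X → ℝ and a constraint φ ∈ C⁰(X,ℝ^n), and take h in the interior of the rotation set φ_*(M_T). If {φ_j} is a sequence of constraints converging uniformly to φ, then lim_{j→∞} β_{A,φ_j}(h) = β_{A,φ}(h). -/
open MeasureTheory Filter Topology Metric Set

variable {X : Type*} [MetricSpace X] [CompactSpace X] [MeasurableSpace X] [BorelSpace X]

set_option linter.unusedSectionVars false
set_option linter.unusedVariables false
set_option linter.deprecated false

section Aux
open RealInnerProductSpace
section Infra

variable {F : Type*} [NormedAddCommGroup F] [NormedSpace ℝ F]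

lemma cont_integrable (f : X → F) (hf : Continuous f) (μ : Measure X) [IsFiniteMeasure μ] :
    Integrable f μ :=
  hf.integrable_of_hasCompactSupport (HasCompactSupport.of_compactSpace f)

lemma norm_integral_sub_le (f g : X → F) (hfc : Continuous f) (hgc : Continuous g)
    (μ : ProbabilityMeasure X) (ε : ℝ) (hfg : ∀ x, ‖f x - g x‖ ≤ ε) :
    ‖∫ x, f x ∂(μ : Measure X) - ∫ x, g x ∂(μ : Measure X)‖ ≤ ε := by
  rw [← integral_sub (cont_integrable f hfc _) (cont_integrable g hgc _)]
  calc ‖∫ x, (f x - g x) ∂(μ : Measure X)‖ ≤ ε * ((μ : Measure X) Set.univ).toReal :=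
        norm_integral_le_of_norm_le_const (ae_of_all _ hfg)
    _ = ε := by simp

lemma abs_intA_le (A : X → ℝ) (hA : Continuous A) (B : ℝ) (hB : ∀ x, |A x| ≤ B)
    (μ : ProbabilityMeasure X) : |intA A μ| ≤ B := by
  have := norm_integral_le_of_norm_le_const (μ := (μ : Measure X)) (f := A)
    (C := B) (ae_of_all _ hB)
  simpa [intA] using this

noncomputable def combo {ι : Type*} [Fintype ι] (w : ι → ℝ) (σ : ι → ProbabilityMeasure X) :
    Measure X :=
  ∑ i, ENNReal.ofReal (w i) • (σ i : Measure X)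

lemma combo_isProb {ι : Type*} [Fintype ι] {w : ι → ℝ} (hw : w ∈ stdSimplex ℝ ι)
    (σ : ι → ProbabilityMeasure X) : IsProbabilityMeasure (combo w σ) := by
  constructor
  rw [combo]
  rw [Measure.finset_sum_apply _ _ _]
  · simp only [Measure.smul_apply, smul_eq_mul, measure_univ, mul_one]
    rw [← ENNReal.ofReal_sum_of_nonneg (fun i _ => hw.1 i)]
    simp [hw.2]

noncomputable def comboP {ι : Type*} [Fintype ι] {w : ι → ℝ} (hw : w ∈ stdSimplex ℝ ι)
    (σ : ι → ProbabilityMeasure X) : ProbabilityMeasure X :=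
  ⟨combo w σ, combo_isProb hw σ⟩

lemma comboP_mem_MT {ι : Type*} [Fintype ι] {w : ι → ℝ} (hw : w ∈ stdSimplex ℝ ι)
    {σ : ι → ProbabilityMeasure X} {T : X → X} (hT : Continuous T)
    (hσ : ∀ i, σ i ∈ MT T) : comboP hw σ ∈ MT T := by
  show Measure.map T (combo w σ) = combo w σ
  rw [combo, ← Measure.mapₗ_apply_of_measurable hT.measurable, map_sum]
  refine Finset.sum_congr rfl fun i _ => ?_
  rw [LinearMap.map_smul, Measure.mapₗ_apply_of_measurable hT.measurable, hσ i]

lemma integral_comboP {ι : Type*} [Fintype ι] {w : ι → ℝ} (hw : w ∈ stdSimplex ℝ ι)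
    (σ : ι → ProbabilityMeasure X) (f : X → F) (hf : Continuous f) :
    ∫ x, f x ∂(comboP hw σ : Measure X) = ∑ i, w i • ∫ x, f x ∂(σ i : Measure X) := by
  show ∫ x, f x ∂(combo w σ) = _
  rw [combo, integral_finset_sum_measure (fun i _ => (cont_integrable f hf _).smul_measure
    ENNReal.ofReal_ne_top)]
  refine Finset.sum_congr rfl fun i _ => ?_
  rw [integral_smul_measure, ENNReal.toReal_ofReal (hw.1 i)]

lemma rotv_comboP {n : ℕ} {ι : Type*} [Fintype ι] {w : ι → ℝ} (hw : w ∈ stdSimplex ℝ ι)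
    (σ : ι → ProbabilityMeasure X) (φ : X → EuclideanSpace ℝ (Fin n)) (hφ : Continuous φ) :
    rotv φ (comboP hw σ) = ∑ i, w i • rotv φ (σ i) :=
  integral_comboP hw σ φ hφ

lemma intA_comboP {ι : Type*} [Fintype ι] {w : ι → ℝ} (hw : w ∈ stdSimplex ℝ ι)
    (σ : ι → ProbabilityMeasure X) (A : X → ℝ) (hA : Continuous A) :
    intA A (comboP hw σ) = ∑ i, w i • intA A (σ i) :=
  integral_comboP hw σ A hA

end Infra


-- helper algebraic lemmas
lemma pmid (a : ℝ) : max a 0 * a + max (-a) 0 * (-a) = a * a := by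
  rcases le_total 0 a with h | h
  · rw [max_eq_left h, max_eq_right (neg_nonpos.mpr h)]; ring
  · rw [max_eq_right h, max_eq_left (neg_nonneg.mpr h)]; ring

lemma optsum {n : ℕ} (g : Option (Fin n × Bool) → ℝ) :
    ∑ i, g i = g none + ∑ i : Fin n, (g (some (i, true)) + g (some (i, false))) := by
  rw [Fintype.sum_option]
  congr 1
  rw [Fintype.sum_prod_type]
  exact Finset.sum_congr rfl fun i _ => by rw [Fintype.sum_bool]

variable {n : ℕ}

lemma sum_sq_of_unit (c : EuclideanSpace ℝ (Fin n)) (hc : ‖c‖ = 1) :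
    ∑ i, c i * c i = 1 := by
  have h1 : ⟪c, c⟫ = 1 := by
    rw [real_inner_self_eq_norm_mul_norm, hc]; norm_num
  rw [PiLp.inner_apply] at h1
  simpa [PiLp.inner_apply, RCLike.inner_apply, conj_trivial, pow_two] using h1

lemma one_le_S (c : EuclideanSpace ℝ (Fin n)) (hc : ‖c‖ = 1) :
    1 ≤ ∑ i, |c i| := by
  set S := ∑ i, |c i| with hS
  have hS0 : 0 ≤ S := Finset.sum_nonneg fun i _ => abs_nonneg _
  have habs : ∀ i : Fin n, |c i| ≤ S :=
    fun i => Finset.single_le_sum (f := fun i => |c i|) (fun j _ => abs_nonneg _) (Finset.mem_univ i)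
  have h1 : (1:ℝ) ≤ S * S := by
    calc (1:ℝ) = ∑ i, c i * c i := (sum_sq_of_unit c hc).symm
    _ ≤ ∑ i, |c i| * S := Finset.sum_le_sum fun i _ => by
        calc c i * c i = |c i| * |c i| := (abs_mul_abs_self _).symm
        _ ≤ |c i| * S := mul_le_mul_of_nonneg_left (habs i) (abs_nonneg _)
    _ = S * S := by rw [← Finset.sum_mul]
  nlinarith

lemma S_le_sqrt (c : EuclideanSpace ℝ (Fin n)) (hc : ‖c‖ = 1) :
    ∑ i, |c i| ≤ Real.sqrt (n + 1) := by
  set d : EuclideanSpace ℝ (Fin n) := WithLp.toLp 2 (fun i => |c i|) with hd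
  set o : EuclideanSpace ℝ (Fin n) := WithLp.toLp 2 (fun _ => 1) with ho
  have hdo : ⟪d, o⟫ = ∑ i, |c i| := by
    rw [PiLp.inner_apply]
    simp [PiLp.inner_apply, RCLike.inner_apply, conj_trivial, hd, ho]
  have hdd : ⟪d, d⟫ = 1 := by
    have : ∑ i, |c i| * |c i| = 1 := by
      simp only [abs_mul_abs_self]; exact sum_sq_of_unit c hc
    rw [PiLp.inner_apply]
    simpa [PiLp.inner_apply, RCLike.inner_apply, conj_trivial, hd, pow_two] using this
  have hoo : ⟪o, o⟫ = (n : ℝ) := by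
    rw [PiLp.inner_apply]
    simp [PiLp.inner_apply, RCLike.inner_apply, conj_trivial, ho]
  have hnd : ‖d‖ = 1 := by
    have := real_inner_self_eq_norm_mul_norm d
    nlinarith [norm_nonneg d]
  have hno : ‖o‖ ≤ Real.sqrt (n+1) := by
    have h2 := real_inner_self_eq_norm_mul_norm o
    have hs : Real.sqrt (n+1) * Real.sqrt (n+1) = (n:ℝ)+1 :=
      Real.mul_self_sqrt (by positivity)
    nlinarith [norm_nonneg o, Real.sqrt_nonneg ((n:ℝ)+1)]
  calc ∑ i, |c i| = ⟪d, o⟫ := hdo.symm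
  _ ≤ ‖d‖ * ‖o‖ := real_inner_le_norm d o
  _ ≤ Real.sqrt (n+1) := by rw [hnd, one_mul]; exact hno

variable {X : Type*} [MetricSpace X] [CompactSpace X] [MeasurableSpace X] [BorelSpace X]

set_option maxHeartbeats 2000000 in
lemma corr {n : ℕ} (T : X → X) (hT : Continuous T) (A : X → ℝ) (hA : Continuous A)
    (B : ℝ) (hB0 : 0 ≤ B) (hB : ∀ μ : ProbabilityMeasure X, |intA A μ| ≤ B)
    (φ : C(X, EuclideanSpace ℝ (Fin n))) (h : EuclideanSpace ℝ (Fin n)) (r : ℝ) (hr : 0 < r)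
    (hball : ball h r ⊆ rotv (⇑φ) '' MT T)
    (ψ : C(X, EuclideanSpace ℝ (Fin n))) (ε : ℝ) (hε0 : 0 ≤ ε)
    (hψφ : ∀ μ : ProbabilityMeasure X, ‖rotv ⇑ψ μ - rotv ⇑φ μ‖ ≤ ε)
    (hεr : ε ≤ r / (4 * Real.sqrt (n+1)))
    (μ0 : ProbabilityMeasure X) (hμ0 : μ0 ∈ MT T) (hμ0h : ‖rotv ⇑ψ μ0 - h‖ ≤ ε) :
    ∃ ν ∈ MT T, rotv ⇑ψ ν = h ∧
      intA A μ0 - ε * (4 * Real.sqrt (n+1) / r) * B ≤ intA A ν := by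
  classical
  set sq := Real.sqrt ((n:ℝ)+1) with hsqdef
  have hsq1 : 1 ≤ sq := by
    nlinarith [Real.sq_sqrt (show (0:ℝ) ≤ (n:ℝ)+1 by positivity),
      Real.sqrt_nonneg ((n:ℝ)+1), (Nat.cast_nonneg n : (0:ℝ) ≤ n)]
  have hsq0 : 0 < sq := lt_of_lt_of_le one_pos hsq1
  set s := 3*r/(4*sq) - ε with hsdef
  have hs : r/(2*sq) ≤ s := by
    have : ε ≤ r / (4*sq) := hεr
    have h34 : 3*r/(4*sq) - r/(4*sq) = r/(2*sq) := by field_simp; ring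
    linarith [h34]
  have hs0 : 0 < s := lt_of_lt_of_le (by positivity) hs
  set t := ε / s with htdef
  have ht0 : 0 ≤ t := div_nonneg hε0 hs0.le
  have hts : t * s = ε := div_mul_cancel₀ ε hs0.ne'
  have ht1 : t ≤ 1 := by
    rw [htdef, div_le_one hs0]
    calc ε ≤ r/(4*sq) := hεr
    _ ≤ r/(2*sq) := by
        apply div_le_div_of_nonneg_left hr.le (by positivity)
        nlinarith
    _ ≤ s := hs
  have htb : t ≤ ε * (2*sq/r) := by
    rw [htdef]
    rw [div_le_iff₀ hs0]
    have : ε * (2*sq/r) * (r/(2*sq)) = ε := by field_simp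
    calc ε = ε * (2*sq/r) * (r/(2*sq)) := this.symm
    _ ≤ ε * (2*sq/r) * s := by
        apply mul_le_mul_of_nonneg_left hs (by positivity)
  clear_value sq s t
  -- select the extreme measures
  have hsel : ∀ p : Fin n × Bool, ∃ σ, σ ∈ MT T ∧ rotv ⇑φ σ =
      h + (if p.2 then (3*r/4) else -(3*r/4)) • EuclideanSpace.single p.1 (1:ℝ) := by
    intro p
    have hmem : h + ((if p.2 then (3*r/4) else -(3*r/4)) • EuclideanSpace.single p.1 (1:ℝ))
        ∈ ball h r := by
      rw [mem_ball, dist_eq_norm, add_sub_cancel_left, norm_smul, EuclideanSpace.norm_single,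
        norm_one, mul_one, Real.norm_eq_abs]
      have : |if p.2 then (3*r/4) else -(3*r/4)| = 3*r/4 := by
        split <;> [rw [abs_of_pos (by linarith)]; rw [abs_neg, abs_of_pos (by linarith)]]
      rw [this]; linarith
    obtain ⟨σ, hσ, hrot⟩ := hball hmem
    exact ⟨σ, hσ, hrot⟩
  choose σsel hσMT hσrot using hsel
  set σ' : (Option (Fin n × Bool)) → ProbabilityMeasure X := fun i => i.elim μ0 σsel with hσ'
  set pts : (Option (Fin n × Bool)) → EuclideanSpace ℝ (Fin n) × ℝ := fun i => (rotv ⇑ψ (σ' i), intA A (σ' i)) with hpts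
  set Lmap : ((Option (Fin n × Bool)) → ℝ) → EuclideanSpace ℝ (Fin n) × ℝ := fun w => ∑ i, w i • pts i with hLmap
  set b0 := intA A μ0 with hb0
  set θ := b0 - t * (2*B) with hθ
  set K' := Lmap '' stdSimplex ℝ (Option (Fin n × Bool)) with hK'
  set Dfull := K' ∩ {p : EuclideanSpace ℝ (Fin n) × ℝ | θ ≤ p.2} with hDfull
  set D := Prod.fst '' Dfull with hD
  have hLlin : IsLinearMap ℝ Lmap := by
    constructor
    · intro a b
      simp only [hLmap, Pi.add_apply, add_smul, Finset.sum_add_distrib]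
    · intro m a
      simp only [hLmap, Pi.smul_apply, smul_eq_mul, mul_smul, ← Finset.smul_sum]
  have hLcont : Continuous Lmap := by
    apply continuous_finset_sum
    intro i _
    exact (continuous_apply i).smul continuous_const
  have hK'c : IsCompact K' := (isCompact_stdSimplex ℝ (Option (Fin n × Bool))).image hLcont
  have hK'conv : Convex ℝ K' := (convex_stdSimplex ℝ (Option (Fin n × Bool))).is_linear_image hLlin
  have hDfc : IsCompact Dfull :=
    hK'c.inter_right (isClosed_le continuous_const continuous_snd)
  have hDfconv : Convex ℝ Dfull := by
    apply hK'conv.inter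
    intro p hp q hq a b ha hb hab
    simp only [mem_setOf_eq] at hp hq ⊢
    have : (a • p + b • q).2 = a * p.2 + b * q.2 := rfl
    rw [this]
    have habθ : a*θ + b*θ = θ := by rw [← add_mul, hab, one_mul]
    nlinarith [mul_le_mul_of_nonneg_left hp ha, mul_le_mul_of_nonneg_left hq hb]
  have hDc : IsCompact D := hDfc.image continuous_fst
  have hDconv : Convex ℝ D := hDfconv.linear_image (LinearMap.fst ℝ (EuclideanSpace ℝ (Fin n)) ℝ)
  -- basic facts about Lmap coordinates
  have hLfst : ∀ w : (Option (Fin n × Bool)) → ℝ, (Lmap w).1 = ∑ i, w i • (pts i).1 := by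
    intro w
    simp only [hLmap, Prod.fst_sum, Prod.smul_fst]
  have hLsnd : ∀ w : (Option (Fin n × Bool)) → ℝ, (Lmap w).2 = ∑ i, w i * (pts i).2 := by
    intro w
    simp only [hLmap, Prod.snd_sum, Prod.smul_snd, smul_eq_mul]
  -- the base point is in D
  have hw0 : (Pi.single (none : (Option (Fin n × Bool))) (1:ℝ)) ∈ stdSimplex ℝ (Option (Fin n × Bool)) := by
    constructor
    · intro i
      rcases eq_or_ne i none with hi | hi
      · subst hi; simp
      · simp [Pi.single_apply, hi]
    · simp [Finset.sum_pi_single]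
  have hLw0 : Lmap (Pi.single (none : (Option (Fin n × Bool))) (1:ℝ)) = pts none := by
    simp only [hLmap]
    rw [Finset.sum_eq_single (none : (Option (Fin n × Bool)))]
    · simp
    · intro b _ hb
      simp [Pi.single_apply, hb]
    · simp
  have ha0D : rotv ⇑ψ μ0 ∈ D := by
    refine ⟨pts none, ⟨⟨_, hw0, hLw0⟩, ?_⟩, rfl⟩
    show θ ≤ intA A (σ' none)
    have : σ' none = μ0 := rfl
    rw [this, hθ]
    nlinarith
  -- main claim : h ∈ D
  have hhD : h ∈ D := by
    by_contra hcon
    obtain ⟨f, u, hfu, huh⟩ := geometric_hahn_banach_closed_point hDconv hDc.isClosed hcon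
    set v := (InnerProductSpace.toDual ℝ (EuclideanSpace ℝ (Fin n))).symm f with hv
    have hvy : ∀ y : EuclideanSpace ℝ (Fin n), ⟪v, y⟫ = f y := fun y => InnerProductSpace.toDual_symm_apply
    have hv0 : v ≠ 0 := by
      intro h0
      have h1 : f (rotv ⇑ψ μ0) < u := hfu _ ha0D
      have h2 : f (rotv ⇑ψ μ0) = 0 := by rw [← hvy, h0, inner_zero_left]
      have h3 : f h = 0 := by rw [← hvy, h0, inner_zero_left]
      rw [h3] at huh; rw [h2] at h1; linarith
    set c : EuclideanSpace ℝ (Fin n) := ‖v‖⁻¹ • v with hc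
    have hvnorm : 0 < ‖v‖ := norm_pos_iff.mpr hv0
    have hc1 : ‖c‖ = 1 := by
      rw [hc, norm_smul, norm_inv, norm_norm, inv_mul_cancel₀ hvnorm.ne']
    have hcv : ∀ y : EuclideanSpace ℝ (Fin n), f y = ‖v‖ * ⟪c, y⟫ := by
      intro y
      rw [hc, real_inner_smul_left, hvy, ← mul_assoc, mul_inv_cancel₀ hvnorm.ne', one_mul]
    clear_value v
    set S := ∑ i, |c i| with hSdef
    have hS1 : 1 ≤ S := one_le_S c hc1
    have hS0 : 0 < S := lt_of_lt_of_le one_pos hS1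
    have hSsq : S ≤ sq := by rw [hSdef, hsqdef]; exact S_le_sqrt c hc1
    clear_value S
    -- the weights
    set wc : (Option (Fin n × Bool)) → ℝ := fun i =>
      i.elim (1 - t) (fun p => t * ((if p.2 then max (c p.1) 0 else max (-(c p.1)) 0) / S))
      with hwc
    have hwcmem : wc ∈ stdSimplex ℝ (Option (Fin n × Bool)) := by
      constructor
      · intro i
        rcases i with _ | p
        · show (0:ℝ) ≤ 1 - t; linarith
        · show (0:ℝ) ≤ t * ((if p.2 then max (c p.1) 0 else max (-(c p.1)) 0) / S)
          have : (0:ℝ) ≤ (if p.2 then max (c p.1) 0 else max (-(c p.1)) 0) := by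
            split <;> exact le_max_right _ _
          positivity
      · rw [optsum wc]
        have hsome : ∀ i : Fin n, wc (some (i, true)) + wc (some (i, false)) =
            (t/S) * |c i| := by
          intro i
          show t * (max (c i) 0 / S) + t * (max (-(c i)) 0 / S) = (t/S) * |c i|
          have habs := max_zero_add_max_neg_zero_eq_abs_self (c i)
          linear_combination (t/S) * habs
        rw [Finset.sum_congr rfl (fun i _ => hsome i), ← Finset.mul_sum, ← hSdef]
        show 1 - t + t / S * S = 1
        field_simp
        ring
    have hsumsome : ∑ p : Fin n × Bool, wc (some p) = t := by
      have := optsum wc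
      have hsum1 : ∑ i, wc i = 1 := hwcmem.2
      have hnone : wc none = 1 - t := rfl
      have h2 : ∑ p : Fin n × Bool, wc (some p) =
          ∑ i : Fin n, (wc (some (i, true)) + wc (some (i, false))) := by
        rw [Fintype.sum_prod_type]
        exact Finset.sum_congr rfl fun i _ => by rw [Fintype.sum_bool]
      rw [h2]
      have := optsum wc
      rw [hsum1, hnone] at this
      linarith
    -- the combined point
    set pc := Lmap wc with hpc
    have hpcK : pc ∈ K' := ⟨wc, hwcmem, rfl⟩
    have hpc2 : θ ≤ pc.2 := by
      rw [hpc, hLsnd, optsum (fun i => wc i * (pts i).2)]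
      have hnone : wc none * (pts none).2 = (1-t) * b0 := rfl
      have hlow : ∀ i : Fin n,
          (-B) * (wc (some (i,true)) + wc (some (i,false))) ≤
          wc (some (i,true)) * (pts (some (i,true))).2 +
          wc (some (i,false)) * (pts (some (i,false))).2 := by
        intro i
        have h1 : ∀ p : Fin n × Bool, (-B) * wc (some p) ≤ wc (some p) * (pts (some p)).2 := by
          intro p
          have hb := hB (σ' (some p))
          have hwnn := hwcmem.1 (some p)
          have : -B ≤ (pts (some p)).2 := by
            have := abs_le.mp hb
            exact this.1
          nlinarith
        have := h1 (i, true)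
        have := h1 (i, false)
        linarith [h1 (i,true), h1 (i,false)]
      have hsumlow : ∑ i : Fin n, ((-B) * (wc (some (i,true)) + wc (some (i,false)))) ≤
          ∑ i : Fin n, (wc (some (i,true)) * (pts (some (i,true))).2 +
            wc (some (i,false)) * (pts (some (i,false))).2) :=
        Finset.sum_le_sum fun i _ => hlow i
      have hsum2 : ∑ i : Fin n, ((-B) * (wc (some (i,true)) + wc (some (i,false)))) =
          (-B) * t := by
        rw [← Finset.mul_sum]
        congr 1
        rw [← hsumsome, Fintype.sum_prod_type]
        exact (Finset.sum_congr rfl fun i _ => by rw [Fintype.sum_bool]).symm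
      rw [hnone]
      have hb0B : |b0| ≤ B := hB μ0
      have := abs_le.mp hb0B
      rw [hθ]
      nlinarith [hsumlow, hsum2]
    have hpcD : pc.1 ∈ D := ⟨pc, ⟨hpcK, hpc2⟩, rfl⟩
    -- now the lower bound on ⟪c, pc.1 - h⟫
    have hkey : 0 ≤ ⟪c, pc.1 - h⟫ := by
      have hdiff : pc.1 - h = ∑ i, wc i • ((pts i).1 - h) := by
        have h1 : ∑ i, wc i • ((pts i).1 - h) = (∑ i, wc i • (pts i).1) - (∑ i, wc i) • h := by
          rw [Finset.sum_smul, ← Finset.sum_sub_distrib]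
          exact Finset.sum_congr rfl fun i _ => by rw [smul_sub]
        rw [h1, hwcmem.2, one_smul, hpc, hLfst]
      rw [hdiff, inner_sum]
      have hterm : ∀ i : (Option (Fin n × Bool)), ⟪c, wc i • ((pts i).1 - h)⟫ = wc i * ⟪c, (pts i).1 - h⟫ :=
        fun i => real_inner_smul_right _ _ _
      rw [Finset.sum_congr rfl fun i _ => hterm i]
      -- lower bounds for each inner product
      set g : (Option (Fin n × Bool)) → ℝ := fun i => ⟪c, (pts i).1 - h⟫ with hg
      set lb : (Option (Fin n × Bool)) → ℝ := fun i =>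
        i.elim (-ε) (fun p => (if p.2 then (3*r/4) else -(3*r/4)) * c p.1 - ε) with hlb
      have hglb : ∀ i, lb i ≤ g i := by
        intro i
        rcases i with _ | p
        · show -ε ≤ ⟪c, rotv ⇑ψ μ0 - h⟫
          have h1 : |⟪c, rotv ⇑ψ μ0 - h⟫| ≤ ‖c‖ * ‖rotv ⇑ψ μ0 - h‖ :=
            abs_real_inner_le_norm _ _
          rw [hc1, one_mul] at h1
          have := abs_le.mp h1
          linarith [this.1, hμ0h]
        · show (if p.2 then (3*r/4) else -(3*r/4)) * c p.1 - ε ≤ ⟪c, rotv ⇑ψ (σsel p) - h⟫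
          have hsplit : rotv ⇑ψ (σsel p) - h =
              (rotv ⇑ψ (σsel p) - rotv ⇑φ (σsel p)) +
              ((if p.2 then (3*r/4) else -(3*r/4)) • EuclideanSpace.single p.1 (1:ℝ)) := by
            rw [hσrot p]; abel
          rw [hsplit, inner_add_right, real_inner_smul_right]
          have hsingle : ⟪c, EuclideanSpace.single p.1 (1:ℝ)⟫ = c p.1 := by
            rw [EuclideanSpace.inner_single_right]
            simp
          rw [hsingle]
          have h1 : |⟪c, rotv ⇑ψ (σsel p) - rotv ⇑φ (σsel p)⟫| ≤
              ‖c‖ * ‖rotv ⇑ψ (σsel p) - rotv ⇑φ (σsel p)‖ := abs_real_inner_le_norm _ _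
          rw [hc1, one_mul] at h1
          have h2 := abs_le.mp h1
          have h3 := hψφ (σsel p)
          linarith [h2.1]
      have hsum_ge : ∑ i, wc i * lb i ≤ ∑ i, wc i * g i :=
        Finset.sum_le_sum fun i _ => mul_le_mul_of_nonneg_left (hglb i) (hwcmem.1 i)
      -- compute ∑ wc i * lb i
      have hcompute : ∑ i, wc i * lb i = (1-t) * (-ε) + ((3*r/4) * (t/S) - t * ε) := by
        rw [optsum (fun i => wc i * lb i)]
        have hnone : wc none * lb none = (1-t) * (-ε) := rfl
        congr 1
        have hterm : ∀ i : Fin n,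
            wc (some (i,true)) * lb (some (i,true)) + wc (some (i,false)) * lb (some (i,false)) =
            (3*r/4) * (t/S) * (c i * c i) - (t/S) * |c i| * ε := by
          intro i
          show t * (max (c i) 0 / S) * ((3*r/4) * c i - ε) +
            t * (max (-(c i)) 0 / S) * (-(3*r/4) * c i - ε) =
            (3*r/4) * (t/S) * (c i * c i) - (t/S) * |c i| * ε
          have hid := pmid (c i)
          have habs := max_zero_add_max_neg_zero_eq_abs_self (c i)
          linear_combination ((t/S)*(3*r/4)) * hid - ((t/S)*ε) * habs
        rw [Finset.sum_congr rfl (fun i _ => hterm i), Finset.sum_sub_distrib]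
        have h1 : ∑ i : Fin n, (3*r/4) * (t/S) * (c i * c i) = (3*r/4) * (t/S) := by
          rw [← Finset.mul_sum, sum_sq_of_unit c hc1, mul_one]
        have h2 : ∑ i : Fin n, (t/S) * |c i| * ε = t * ε := by
          have hstep : ∀ i : Fin n, (t/S) * |c i| * ε = (t*ε/S) * |c i| := fun i => by ring
          rw [Finset.sum_congr rfl fun i _ => hstep i, ← Finset.mul_sum, ← hSdef]
          field_simp
        rw [h1, h2]
      have hfinal : 0 ≤ (1-t) * (-ε) + ((3*r/4) * (t/S) - t * ε) := by
        have h34 : (3*r/4) * (t/S) ≥ (3*r/4) * (t/sq) := by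
          apply mul_le_mul_of_nonneg_left _ (by linarith)
          exact div_le_div_of_nonneg_left ht0 hS0 hSsq
        have hteq : (3*r/4) * (t/sq) = t * (s + ε) := by
          rw [hsdef]; field_simp; ring
        have : t * (s + ε) = ε + t * ε := by rw [mul_add, hts]
        nlinarith [mul_nonneg ht0 hε0]
      linarith [hsum_ge, hcompute, hfinal]
    -- contradiction
    have h1 : f pc.1 < u := hfu _ hpcD
    have h2 : f h ≤ f pc.1 := by
      rw [hcv h, hcv pc.1]
      have : ⟪c, h⟫ ≤ ⟪c, pc.1⟫ := by
        have := hkey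
        rw [inner_sub_right] at this
        linarith
      nlinarith [hvnorm]
    linarith
  -- extract the measure
  obtain ⟨p, ⟨⟨w, hwmem, hLw⟩, hp2⟩, hp1⟩ := hhD
  refine ⟨comboP hwmem σ', comboP_mem_MT hwmem hT ?_, ?_, ?_⟩
  · intro i
    rcases i with _ | q
    · exact hμ0
    · exact hσMT q
  · rw [rotv_comboP hwmem σ' (⇑ψ) ψ.continuous, ← hLfst, hLw, hp1]
  · have he : intA A (comboP hwmem σ') = (Lmap w).2 := by
      rw [intA_comboP hwmem σ' A hA, hLsnd]
      rfl
    rw [he, hLw]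
    have hθle : θ ≤ p.2 := hp2
    rw [hθ] at hθle
    have h2B : (0:ℝ) ≤ 2*B := by linarith
    have hmul := mul_le_mul_of_nonneg_right htb h2B
    have heq2 : ε * (2*sq/r) * (2*B) = ε * (4*sq/r) * B := by ring
    linarith


end Aux

/-- if `h` lies in the interior of the rotation set `φ_*(M_T)` and `φ_j → φ`
uniformly, then `β_{A,φ_j}(h) → β_{A,φ}(h)`. -/
theorem stmt11 {n : ℕ} (T : X → X) (hT : Continuous T) (A : X → ℝ) (hA : Continuous A)
    (φ : C(X, EuclideanSpace ℝ (Fin n))) (φseq : ℕ → C(X, EuclideanSpace ℝ (Fin n)))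
    (hconv : Tendsto φseq atTop (𝓝 φ))
    (h : EuclideanSpace ℝ (Fin n)) (hh : h ∈ interior (rotv (⇑φ) '' MT T)) :
    Tendsto (fun j => betaFn T A (⇑(φseq j)) h) atTop (𝓝 (betaFn T A (⇑φ) h)) := by

  classical
  obtain ⟨μh, hμhMT, hμhrot⟩ := interior_subset hh
  have hXne : Nonempty X := μh.nonempty
  -- a bound on |A|
  obtain ⟨x0, -, hx0⟩ := isCompact_univ.exists_isMaxOn univ_nonempty
    ((continuous_abs.comp hA).continuousOn)
  set B := |A x0| with hBdef
  have hBpt : ∀ x : X, |A x| ≤ B := fun x => hx0 (mem_univ x)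
  have hB0 : 0 ≤ B := abs_nonneg _
  have hB : ∀ μ : ProbabilityMeasure X, |intA A μ| ≤ B := fun μ => abs_intA_le A hA B hBpt μ
  -- the radius
  obtain ⟨r, hr, hball'⟩ := Metric.isOpen_iff.mp isOpen_interior h hh
  have hball : ball h r ⊆ rotv (⇑φ) '' MT T := hball'.trans interior_subset
  set sq := Real.sqrt ((n:ℝ)+1) with hsqdef
  have hsq0 : 0 < sq := Real.sqrt_pos.mpr (by positivity)
  -- uniform distances
  set δ : ℕ → ℝ := fun j => dist (φseq j) φ with hδdef
  have hδ0 : Tendsto δ atTop (𝓝 0) := tendsto_iff_dist_tendsto_zero.mp hconv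
  have hδnn : ∀ j, 0 ≤ δ j := fun j => dist_nonneg
  have hptw : ∀ j x, ‖(φseq j) x - φ x‖ ≤ δ j := fun j x => by
    rw [← dist_eq_norm]; exact ContinuousMap.dist_apply_le_dist x
  have hrotdist : ∀ j (μ : ProbabilityMeasure X), ‖rotv ⇑(φseq j) μ - rotv ⇑φ μ‖ ≤ δ j :=
    fun j μ => norm_integral_sub_le _ _ (φseq j).continuous φ.continuous μ _ (hptw j)
  have hbdd : ∀ ψ : X → EuclideanSpace ℝ (Fin n),
      BddAbove (intA A '' {μ ∈ MT T | rotv ψ μ = h}) := by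
    intro ψ
    refine ⟨B, ?_⟩
    rintro y ⟨μ, -, rfl⟩
    exact (abs_le.mp (hB μ)).2
  set τ : ℕ → ℝ := fun j => δ j * (4 * sq / r) * B with hτdef
  have hτ0 : Tendsto τ atTop (𝓝 0) := by
    have := (hδ0.mul_const (4 * sq / r)).mul_const B
    simpa using this
  have hτnn : ∀ j, 0 ≤ τ j := fun j => by
    have : 0 ≤ δ j * (4 * sq / r) := mul_nonneg (hδnn j) (by positivity)
    exact mul_nonneg this hB0
  have hev : ∀ᶠ j in atTop, δ j ≤ r / (4 * sq) := by
    have hpos : 0 < r / (4 * sq) := by positivity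
    exact (hδ0.eventually (gt_mem_nhds hpos)).mono fun j hj => hj.le
  -- lower bound eventually
  have hlow : ∀ᶠ j in atTop, betaFn T A (⇑φ) h - τ j ≤ betaFn T A (⇑(φseq j)) h := by
    refine hev.mono fun j hj => ?_
    have hne : (intA A '' {μ ∈ MT T | rotv (⇑φ) μ = h}).Nonempty :=
      ⟨intA A μh, ⟨μh, ⟨hμhMT, hμhrot⟩, rfl⟩⟩
    rw [betaFn, sub_le_iff_le_add]
    refine csSup_le hne ?_
    rintro y ⟨μ, ⟨hμMT, hμrot⟩, rfl⟩
    have hμ0h : ‖rotv ⇑(φseq j) μ - h‖ ≤ δ j := by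
      rw [← hμrot]; exact hrotdist j μ
    obtain ⟨ν, hνMT, hνrot, hνA⟩ := corr T hT A hA B hB0 hB φ h r hr hball (φseq j)
      (δ j) (hδnn j) (hrotdist j) (by rw [hsqdef] at hj; exact_mod_cast hj) μ hμMT hμ0h
    have hle : intA A ν ≤ betaFn T A (⇑(φseq j)) h :=
      le_csSup (hbdd ⇑(φseq j)) ⟨ν, ⟨hνMT, hνrot⟩, rfl⟩
    have : δ j * (4 * Real.sqrt ((n:ℝ)+1) / r) * B = τ j := by rw [hτdef, hsqdef]
    rw [this] at hνA
    linarith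
  -- upper bound eventually
  have hup : ∀ᶠ j in atTop, betaFn T A (⇑(φseq j)) h ≤ betaFn T A (⇑φ) h + τ j := by
    refine hev.mono fun j hj => ?_
    -- nonempty fiber for φseq j
    have hμhj : ‖rotv ⇑(φseq j) μh - h‖ ≤ δ j := by rw [← hμhrot]; exact hrotdist j μh
    obtain ⟨ν0, hν0MT, hν0rot, -⟩ := corr T hT A hA B hB0 hB φ h r hr hball (φseq j)
      (δ j) (hδnn j) (hrotdist j) (by rw [hsqdef] at hj; exact_mod_cast hj) μh hμhMT hμhj
    have hnej : (intA A '' {μ ∈ MT T | rotv ⇑(φseq j) μ = h}).Nonempty :=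
      ⟨intA A ν0, ⟨ν0, ⟨hν0MT, hν0rot⟩, rfl⟩⟩
    rw [betaFn]
    refine csSup_le hnej ?_
    rintro y ⟨μ, ⟨hμMT, hμrot⟩, rfl⟩
    have hφφ : ∀ ν : ProbabilityMeasure X, ‖rotv ⇑φ ν - rotv ⇑φ ν‖ ≤ δ j := fun ν => by
      simp [hδnn j]
    have hμ0h : ‖rotv ⇑φ μ - h‖ ≤ δ j := by
      rw [← hμrot, ← norm_neg]
      simpa using hrotdist j μ
    obtain ⟨ν, hνMT, hνrot, hνA⟩ := corr T hT A hA B hB0 hB φ h r hr hball φ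
      (δ j) (hδnn j) hφφ (by rw [hsqdef] at hj; exact_mod_cast hj) μ hμMT hμ0h
    have hle : intA A ν ≤ betaFn T A (⇑φ) h :=
      le_csSup (hbdd ⇑φ) ⟨ν, ⟨hνMT, hνrot⟩, rfl⟩
    have : δ j * (4 * Real.sqrt ((n:ℝ)+1) / r) * B = τ j := by rw [hτdef, hsqdef]
    rw [this] at hνA
    linarith
  -- squeeze
  have hl : Tendsto (fun j => betaFn T A (⇑φ) h - τ j) atTop (𝓝 (betaFn T A (⇑φ) h)) := by
    simpa using tendsto_const_nhds.sub hτ0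
  have hu : Tendsto (fun j => betaFn T A (⇑φ) h + τ j) atTop (𝓝 (betaFn T A (⇑φ) h)) := by
    simpa using tendsto_const_nhds.add hτ0
  exact tendsto_of_tendsto_of_tendsto_of_le_of_le' hl hu hlow hup
end

section
/- Let (Y,B,ν) be a probability space, F : Y → Y an ergodic measure-preserving transformation, and f : Y → ℝ^n an integrable function such that lim_{k→∞} k^{-1/n} ‖S_k f(y) − k f_*(ν)‖ = 0 for ν-almost every y ∈ Y. Then f is joint recurrent with respect to ν, i.e., ν(Ξ(D)) = ν(D) for every D ∈ B. -/
open MeasureTheory Filter Topology Metric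
open scoped ENNReal NNReal


lemma stmt12_packing {n : ℕ} {ε R : ℝ} (hε : 0 < ε) (hR : 0 ≤ R)
    (s : Finset (EuclideanSpace ℝ (Fin n)))
    (hsep : ∀ a ∈ s, ∀ b ∈ s, a ≠ b → ε ≤ dist a b)
    (hbdd : ∀ a ∈ s, ‖a‖ ≤ R) :
    (s.card : ℝ) * (ε / 2) ^ n ≤ (R + ε / 2) ^ n := by
  have hε2 : (0:ℝ) < ε / 2 := by linarith
  have hdisj : (s : Set (EuclideanSpace ℝ (Fin n))).PairwiseDisjoint
      (fun a => ball a (ε / 2)) := by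
    intro a ha b hb hab
    apply ball_disjoint_ball
    rw [add_halves]
    exact hsep a ha b hb hab
  have hsub : (⋃ a ∈ s, ball a (ε / 2)) ⊆ ball (0 : EuclideanSpace ℝ (Fin n)) (R + ε / 2) := by
    intro x hx
    simp only [Set.mem_iUnion] at hx
    obtain ⟨a, ha, hxa⟩ := hx
    rw [mem_ball] at hxa ⊢
    have := hbdd a ha
    calc dist x 0 ≤ dist x a + dist a 0 := dist_triangle _ _ _
    _ < ε / 2 + R := by rw [dist_zero_right]; linarith
    _ = R + ε / 2 := by ring
  have hvol : ∑ a ∈ s, volume (ball a (ε / 2)) ≤ volume (ball (0 : EuclideanSpace ℝ (Fin n)) (R + ε / 2)) := by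
    rw [← measure_biUnion_finset hdisj (fun a _ => measurableSet_ball)]
    exact measure_mono hsub
  have hball : ∀ a : EuclideanSpace ℝ (Fin n), volume (ball a (ε / 2))
      = ENNReal.ofReal ((ε/2) ^ n) * volume (ball (0 : EuclideanSpace ℝ (Fin n)) 1) := by
    intro a
    rw [Measure.addHaar_ball_of_pos volume a hε2, finrank_euclideanSpace_fin]
  rw [Finset.sum_congr rfl (fun a _ => hball a), Finset.sum_const, nsmul_eq_mul,
    Measure.addHaar_ball_of_pos volume _ (by linarith : (0:ℝ) < R + ε/2),
    finrank_euclideanSpace_fin] at hvol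
  have hV0 : volume (ball (0 : EuclideanSpace ℝ (Fin n)) 1) ≠ 0 :=
    (measure_ball_pos volume _ one_pos).ne'
  have hVtop : volume (ball (0 : EuclideanSpace ℝ (Fin n)) 1) ≠ ⊤ :=
    measure_ball_lt_top.ne
  rw [← mul_assoc] at hvol
  have h2 := (ENNReal.mul_le_mul_iff_left hV0 hVtop).mp hvol
  have h3 : ((s.card : ℝ≥0∞) * ENNReal.ofReal ((ε/2)^n)).toReal ≤ (ENNReal.ofReal ((R+ε/2)^n)).toReal := by
    exact ENNReal.toReal_mono (by simp) h2
  rw [ENNReal.toReal_mul, ENNReal.toReal_ofReal (by positivity), ENNReal.toReal_ofReal (by positivity)] at h3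
  simpa using h3

noncomputable def stmt12_birk {Y : Type*} {n : ℕ} (F : Y → Y) (g : Y → EuclideanSpace ℝ (Fin n))
    (m : EuclideanSpace ℝ (Fin n)) (k : ℕ) (z : Y) : EuclideanSpace ℝ (Fin n) :=
  (∑ j ∈ Finset.range k, g (F^[j] z)) - (k : ℝ) • m

lemma stmt12_birk_add {Y : Type*} {n : ℕ} (F : Y → Y) (g : Y → EuclideanSpace ℝ (Fin n))
    (m : EuclideanSpace ℝ (Fin n)) (j k : ℕ) (z : Y) :
    stmt12_birk F g m (j + k) z
      = stmt12_birk F g m j z + stmt12_birk F g m k (F^[j] z) := by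
  unfold stmt12_birk
  rw [Finset.sum_range_add]
  have h : ∀ i, F^[j + i] z = F^[i] (F^[j] z) := fun i => by
    rw [add_comm, Function.iterate_add_apply]
  push_cast
  rw [add_smul]
  simp_rw [h]
  abel

/-- if `F` is ergodic for the probability measure `ν` and the integrable
function `f : Y → ℝ^n` satisfies `k^{-1/n} ‖S_k f(y) - k f_*(ν)‖ → 0` for `ν`-a.e. `y`,
then `f` is joint recurrent: `ν(Ξ(D)) = ν(D)` for every measurable `D`, where `Ξ(D)` is the
set of `z ∈ D` such that for every `ε > 0` there is `L > 0` with `F^L(z) ∈ D` and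
`‖S_L f(z) - L f_*(ν)‖ < ε`. -/
theorem stmt12 {Y : Type*} [MeasurableSpace Y] {n : ℕ} (hn : 0 < n)
    (ν : Measure Y) [IsProbabilityMeasure ν] (F : Y → Y)
    (hF : Ergodic F ν)
    (f : Y → EuclideanSpace ℝ (Fin n)) (hf : Integrable f ν)
    (hlim : ∀ᵐ y ∂ν, Tendsto
      (fun k : ℕ => (k : ℝ) ^ (-(1 / (n : ℝ))) *
        ‖(∑ j ∈ Finset.range k, f (F^[j] y)) - (k : ℝ) • ∫ x, f x ∂ν‖)
      atTop (𝓝 0)) :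
    ∀ D : Set Y, MeasurableSet D →
      ν {z ∈ D | ∀ ε > 0, ∃ L : ℕ, 0 < L ∧ F^[L] z ∈ D ∧
        ‖(∑ j ∈ Finset.range L, f (F^[j] z)) - (L : ℝ) • ∫ x, f x ∂ν‖ < ε} = ν D := by
  intro D hD
  classical
  have hMP : MeasurePreserving F ν ν := hF.toMeasurePreserving
  have hFm : Measurable F := hMP.measurable
  set m : EuclideanSpace ℝ (Fin n) := ∫ x, f x ∂ν with hm
  set g : Y → EuclideanSpace ℝ (Fin n) := hf.1.mk f with hgdef
  have hgsm : StronglyMeasurable g := hf.1.stronglyMeasurable_mk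
  have hfg : f =ᵐ[ν] g := hf.1.ae_eq_mk
  have hgm : Measurable g := hgsm.measurable
  set φ : ℕ → Y → EuclideanSpace ℝ (Fin n) := stmt12_birk F g m with hφdef
  have hΩ : ∀ᵐ z ∂ν, ∀ j : ℕ, f (F^[j] z) = g (F^[j] z) := by
    rw [ae_all_iff]
    intro j
    exact (hMP.iterate j).quasiMeasurePreserving.ae_eq_comp hfg
  have hφmeas : ∀ k, Measurable fun z => φ k z := by
    intro k
    exact (Finset.measurable_sum _ (fun j _ => hgm.comp (hFm.iterate j))).sub measurable_const
  set bad : ℝ → Set Y := fun ε =>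
      D ∩ ⋂ L : ℕ, {z | 0 < L → F^[L] z ∈ D → ε ≤ ‖φ L z‖} with hbaddef
  have hbadmem : ∀ ε z, z ∈ bad ε ↔ z ∈ D ∧ ∀ L, 0 < L → F^[L] z ∈ D → ε ≤ ‖φ L z‖ := by
    intro ε z; simp [hbaddef, Set.mem_iInter]
  set grow : ℝ → ℝ → Set Y :=
    fun η C => ⋂ k : ℕ, {z | ‖φ k z‖ ≤ η * (k : ℝ) ^ ((1 : ℝ)/n) + C} with hgrowdef
  have hgrowmem : ∀ η C z, z ∈ grow η C ↔ ∀ k : ℕ, ‖φ k z‖ ≤ η * (k : ℝ) ^ ((1 : ℝ)/n) + C := by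
    intro η C z; simp [hgrowdef, Set.mem_iInter]
  have hbadmeas : ∀ ε, MeasurableSet (bad ε) := by
    intro ε
    apply hD.inter
    refine MeasurableSet.iInter fun L => ?_
    by_cases hL : 0 < L
    · have : {z | 0 < L → F^[L] z ∈ D → ε ≤ ‖φ L z‖}
          = ((F^[L]) ⁻¹' D)ᶜ ∪ {z | ε ≤ ‖φ L z‖} := by
        ext z; simp [hL, imp_iff_not_or]
      rw [this]
      exact (((hFm.iterate L) hD).compl).union
        (measurableSet_le measurable_const (hφmeas L).norm)
    · have : {z | 0 < L → F^[L] z ∈ D → ε ≤ ‖φ L z‖} = Set.univ := by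
        ext z; simp [hL]
      rw [this]; exact MeasurableSet.univ
  have hgrowmeas : ∀ η C, MeasurableSet (grow η C) := by
    intro η C
    exact MeasurableSet.iInter fun k =>
      measurableSet_le (hφmeas k).norm measurable_const
  -- key counting estimate
  have key : ∀ ε : ℝ, 0 < ε → ∀ η : ℝ, 0 < η → ∀ C : ℝ, 0 ≤ C →
      ν (bad ε ∩ grow η C) ≤ ENNReal.ofReal (η ^ n / (ε/2) ^ n) := by
    intro ε hε η hη C hC
    set E := bad ε ∩ grow η C with hEdef
    have hE : MeasurableSet E := (hbadmeas ε).inter (hgrowmeas η C)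
    set R : ℕ → ℝ := fun N => η * (N:ℝ) ^ ((1:ℝ)/n) + C with hRdef
    have hR0 : ∀ N, 0 ≤ R N := fun N => by
      have : (0:ℝ) ≤ η * (N:ℝ) ^ ((1:ℝ)/n) := by positivity
      simp only [hRdef]; linarith
    have hcount : ∀ N : ℕ, ∀ y : Y,
        ((((Finset.range N).filter (fun k => F^[k] y ∈ E)).card : ℝ)) * (ε/2) ^ n
          ≤ (R N + ε/2) ^ n := by
      intro N y
      set H := (Finset.range N).filter (fun k => F^[k] y ∈ E) with hHdef
      rcases H.eq_empty_or_nonempty with hHe | hne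
      · rw [hHe]
        simp only [Finset.card_empty, Nat.cast_zero, zero_mul]
        positivity
      · set j0 := H.min' hne with hj0
        have hj0H : j0 ∈ H := H.min'_mem hne
        have hHE : ∀ k ∈ H, F^[k] y ∈ E := fun k hk => (Finset.mem_filter.mp hk).2
        have hHN : ∀ k ∈ H, k < N := fun k hk =>
          Finset.mem_range.mp (Finset.mem_filter.mp hk).1
        have hdiff : ∀ j k : ℕ, j < k →
            φ k y - φ j y = φ (k - j) (F^[j] y) := by
          intro j k hjk
          have hjk' : j + (k - j) = k := by omega
          have h2 := stmt12_birk_add F g m j (k - j) y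
          rw [hjk'] at h2
          rw [← hφdef] at h2
          rw [h2]
          abel
        have hsep' : ∀ j ∈ H, ∀ k ∈ H, j < k → ε ≤ ‖φ k y - φ j y‖ := by
          intro j hj k hk hjk
          rw [hdiff j k hjk]
          have hjE := hHE j hj
          have hkE := hHE k hk
          have hbadj := (hbadmem ε _).mp hjE.1
          have hkey := hbadj.2 (k - j) (by omega)
          have hiter : F^[k - j] (F^[j] y) = F^[k] y := by
            rw [← Function.iterate_add_apply]
            congr 1
            omega
          rw [hiter] at hkey
          exact hkey (((hbadmem ε _).mp hkE.1).1)
        set u : ℕ → EuclideanSpace ℝ (Fin n) := fun k => φ k y - φ j0 y with hu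
        have husep : ∀ a ∈ H, ∀ b ∈ H, a ≠ b → ε ≤ dist (u a) (u b) := by
          intro a ha b hb hab
          rcases lt_or_gt_of_ne hab with h | h
          · rw [dist_comm, dist_eq_norm]
            have : u b - u a = φ b y - φ a y := by rw [hu]; exact sub_sub_sub_cancel_right _ _ _
            rw [this]
            exact hsep' a ha b hb h
          · rw [dist_eq_norm]
            have : u a - u b = φ a y - φ b y := by rw [hu]; exact sub_sub_sub_cancel_right _ _ _
            rw [this]
            exact hsep' b hb a ha h
        have hinj : Set.InjOn u H := by
          intro a ha b hb hab
          by_contra hne'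
          have := husep a ha b hb hne'
          rw [hab, dist_self] at this
          linarith
        have hbddu : ∀ k ∈ H, ‖u k‖ ≤ R N := by
          intro k hk
          have hj0k : j0 ≤ k := H.min'_le k hk
          rcases eq_or_lt_of_le hj0k with heq | hlt
          · rw [hu]
            simp only [← heq, sub_self, norm_zero]
            exact hR0 N
          · rw [hu]
            simp only []
            rw [hdiff j0 k hlt]
            have hzE := hHE j0 hj0H
            have hgrw := (hgrowmem η C _).mp hzE.2
            refine le_trans (hgrw (k - j0)) ?_
            rw [hRdef]
            have hle : ((k - j0 : ℕ) : ℝ) ≤ (N : ℝ) := by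
              have := hHN k hk
              exact_mod_cast by omega
            have := Real.rpow_le_rpow (by positivity) hle (by positivity : (0:ℝ) ≤ (1:ℝ)/n)
            simp only []
            nlinarith [this, hη.le]
        have hpack := stmt12_packing hε (hR0 N) (H.image u)
          (fun a ha b hb hab => by
            obtain ⟨a', ha', rfl⟩ := Finset.mem_image.mp ha
            obtain ⟨b', hb', rfl⟩ := Finset.mem_image.mp hb
            exact husep a' ha' b' hb' (fun h => hab (by rw [h])))
          (fun a ha => by
            obtain ⟨a', ha', rfl⟩ := Finset.mem_image.mp ha
            exact hbddu a' ha')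
        rwa [Finset.card_image_of_injOn hinj] at hpack
    have hsum : ∀ N : ℕ, (N : ℝ≥0∞) * ν E
        ≤ ENNReal.ofReal ((R N + ε/2) ^ n / (ε/2) ^ n) := by
      intro N
      have hpre : ∀ k : ℕ, MeasurableSet ((F^[k]) ⁻¹' E) := fun k => (hFm.iterate k) hE
      have h1 : (N : ℝ≥0∞) * ν E = ∑ k ∈ Finset.range N, ν ((F^[k]) ⁻¹' E) := by
        rw [Finset.sum_congr rfl
          (fun k _ => (hMP.iterate k).measure_preimage hE.nullMeasurableSet)]
        simp [Finset.sum_const, mul_comm]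
      have h2 : ∑ k ∈ Finset.range N, ν ((F^[k]) ⁻¹' E)
          = ∫⁻ y, ∑ k ∈ Finset.range N,
              ((F^[k]) ⁻¹' E).indicator (fun _ => (1:ℝ≥0∞)) y ∂ν := by
        rw [lintegral_finset_sum _ (fun k _ => measurable_const.indicator (hpre k))]
        exact Finset.sum_congr rfl fun k _ => (lintegral_indicator_one (hpre k)).symm
      have h3 : ∀ y : Y, (∑ k ∈ Finset.range N,
            ((F^[k]) ⁻¹' E).indicator (fun _ => (1:ℝ≥0∞)) y)
          = (((Finset.range N).filter (fun k => F^[k] y ∈ E)).card : ℝ≥0∞) := by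
        intro y
        rw [Finset.card_filter]
        push_cast
        exact Finset.sum_congr rfl fun k _ => by
          simp [Set.indicator_apply, Set.mem_preimage]
      have h4 : ∀ y : Y, (((Finset.range N).filter (fun k => F^[k] y ∈ E)).card : ℝ≥0∞)
          ≤ ENNReal.ofReal ((R N + ε/2) ^ n / (ε/2) ^ n) := by
        intro y
        have hcardle : ((((Finset.range N).filter (fun k => F^[k] y ∈ E)).card : ℝ))
            ≤ (R N + ε/2) ^ n / (ε/2) ^ n := by
          rw [le_div_iff₀ (by positivity)]
          exact hcount N y
        calc (((Finset.range N).filter (fun k => F^[k] y ∈ E)).card : ℝ≥0∞)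
            = ENNReal.ofReal ((((Finset.range N).filter (fun k => F^[k] y ∈ E)).card : ℝ)) := by
              rw [ENNReal.ofReal_natCast]
          _ ≤ _ := ENNReal.ofReal_le_ofReal hcardle
      calc (N : ℝ≥0∞) * ν E
          = ∫⁻ y, ∑ k ∈ Finset.range N,
              ((F^[k]) ⁻¹' E).indicator (fun _ => (1:ℝ≥0∞)) y ∂ν := by rw [h1, h2]
        _ ≤ ∫⁻ _, ENNReal.ofReal ((R N + ε/2) ^ n / (ε/2) ^ n) ∂ν := by
            refine lintegral_mono fun y => ?_
            rw [h3 y]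
            exact h4 y
        _ = ENNReal.ofReal ((R N + ε/2) ^ n / (ε/2) ^ n) := by
            rw [lintegral_const, measure_univ, mul_one]
    have halg : ∀ N : ℕ, 1 ≤ N → ((R N + ε/2) ^ n / (ε/2) ^ n) / (N:ℝ)
        = (η + (C + ε/2) * ((N:ℝ) ^ ((1:ℝ)/n))⁻¹) ^ n / (ε/2) ^ n := by
      intro N hN
      have hNpos : (0:ℝ) < (N:ℝ) := by exact_mod_cast hN
      have hroot : (0:ℝ) < (N:ℝ) ^ ((1:ℝ)/n) := Real.rpow_pos_of_pos hNpos _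
      have hpow : ((N:ℝ) ^ ((1:ℝ)/n)) ^ n = (N:ℝ) := by
        rw [← Real.rpow_natCast ((N:ℝ) ^ ((1:ℝ)/n)) n, ← Real.rpow_mul hNpos.le]
        rw [one_div, inv_mul_cancel₀ (by exact_mod_cast hn.ne' : (n:ℝ) ≠ 0), Real.rpow_one]
      have hB : η + (C + ε/2) * ((N:ℝ) ^ ((1:ℝ)/n))⁻¹
          = (R N + ε/2) / ((N:ℝ) ^ ((1:ℝ)/n)) := by
        rw [hRdef]
        field_simp
        ring
      rw [hB, div_pow (R N + ε/2) ((N:ℝ) ^ ((1:ℝ)/n)) n, hpow, div_right_comm]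
    have hNb : ∀ N : ℕ, 1 ≤ N → ν E
        ≤ ENNReal.ofReal ((η + (C + ε/2) * ((N:ℝ) ^ ((1:ℝ)/n))⁻¹) ^ n / (ε/2) ^ n) := by
      intro N hN
      have h5 := hsum N
      have hNne : (N:ℝ≥0∞) ≠ 0 := Nat.cast_ne_zero.mpr (by omega)
      rw [← halg N hN, ENNReal.ofReal_div_of_pos (by exact_mod_cast hN : (0:ℝ) < (N:ℝ)),
        ENNReal.ofReal_natCast]
      rw [ENNReal.le_div_iff_mul_le (Or.inl hNne) (Or.inl (ENNReal.natCast_ne_top N))]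
      rw [mul_comm]
      exact h5
    have hlimN : Tendsto
        (fun N : ℕ => ENNReal.ofReal ((η + (C + ε/2) * ((N:ℝ) ^ ((1:ℝ)/n))⁻¹) ^ n / (ε/2) ^ n))
        atTop (𝓝 (ENNReal.ofReal (η ^ n / (ε/2) ^ n))) := by
      apply ENNReal.tendsto_ofReal
      have h6 : Tendsto (fun N : ℕ => ((N:ℝ) ^ ((1:ℝ)/n))⁻¹) atTop (𝓝 0) := by
        have h7 := (tendsto_rpow_atTop (by positivity : (0:ℝ) < (1:ℝ)/n)).comp
          tendsto_natCast_atTop_atTop (α := ℕ)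
        exact h7.inv_tendsto_atTop
      have h8 : Tendsto (fun N : ℕ => η + (C + ε/2) * ((N:ℝ) ^ ((1:ℝ)/n))⁻¹)
          atTop (𝓝 η) := by
        have h9 := h6.const_mul (C + ε/2)
        have h10 := tendsto_const_nhds (x := η) (f := atTop (α := ℕ)) |>.add h9
        simpa using h10
      exact (h8.pow n).div_const _
    exact ge_of_tendsto hlimN (eventually_atTop.mpr ⟨1, hNb⟩)
  -- a.e. covering by growth sets
  have hcover : ∀ η : ℝ, 0 < η → ∀ᵐ z ∂ν, ∃ C : ℕ, z ∈ grow η C := by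
    intro η hη
    filter_upwards [hlim, hΩ] with z hz hΩz
    have heq : ∀ k : ℕ, (∑ j ∈ Finset.range k, f (F^[j] z)) - (k : ℝ) • m = φ k z := by
      intro k
      simp only [hφdef, stmt12_birk]
      congr 1
      exact Finset.sum_congr rfl fun j _ => hΩz j
    have hz' : Tendsto (fun k : ℕ => (k : ℝ) ^ (-(1 / (n : ℝ))) * ‖φ k z‖) atTop (𝓝 0) := by
      refine hz.congr fun k => ?_
      rw [heq]
    obtain ⟨K, hK⟩ := (hz'.eventually (gt_mem_nhds hη)).exists_forall_of_atTop
    set K' := max K 1 with hK'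
    refine ⟨⌈∑ i ∈ Finset.range K', ‖φ i z‖⌉₊, (hgrowmem _ _ _).mpr fun k => ?_⟩
    have hC0 : (0:ℝ) ≤ ⌈∑ i ∈ Finset.range K', ‖φ i z‖⌉₊ := Nat.cast_nonneg _
    by_cases hk : k < K'
    · have h1 : ‖φ k z‖ ≤ ∑ i ∈ Finset.range K', ‖φ i z‖ :=
        Finset.single_le_sum (f := fun i => ‖φ i z‖) (fun i _ => norm_nonneg _) (Finset.mem_range.mpr hk)
      have h2 : (∑ i ∈ Finset.range K', ‖φ i z‖) ≤ ⌈∑ i ∈ Finset.range K', ‖φ i z‖⌉₊ :=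
        Nat.le_ceil _
      have h3 : (0:ℝ) ≤ η * (k : ℝ) ^ ((1:ℝ)/n) := by positivity
      linarith
    · push_neg at hk
      have hk1 : 1 ≤ k := le_trans (le_max_right K 1) hk
      have hkpos : (0:ℝ) < (k : ℝ) ^ ((1:ℝ)/n) :=
        Real.rpow_pos_of_pos (by exact_mod_cast hk1) _
      have h4 := le_of_lt (hK k (le_trans (le_max_left K 1) hk))
      rw [Real.rpow_neg (Nat.cast_nonneg k)] at h4
      have h5 : ‖φ k z‖ ≤ η * (k : ℝ) ^ ((1:ℝ)/n) := by
        rw [inv_mul_le_iff₀ hkpos] at h4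
        linarith [h4]
      linarith
  -- bad sets are null
  have hbadnull : ∀ ε : ℝ, 0 < ε → ν (bad ε) = 0 := by
    intro ε hε
    have hmain : ∀ η : ℝ, 0 < η → ν (bad ε) ≤ ENNReal.ofReal (η ^ n / (ε/2) ^ n) := by
      intro η hη
      have hmono : Monotone (fun C : ℕ => bad ε ∩ grow η C) := by
        intro a b hab
        apply Set.inter_subset_inter_right
        intro z hz
        rw [hgrowmem] at hz ⊢
        intro k
        exact le_trans (hz k) (by gcongr)
      have hae : ν (bad ε \ ⋃ C : ℕ, (bad ε ∩ grow η C)) = 0 := by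
        have h0 := hcover η hη
        rw [ae_iff] at h0
        apply measure_mono_null _ h0
        intro z hz
        simp only [Set.mem_diff, Set.mem_iUnion, Set.mem_inter_iff, not_exists] at hz ⊢
        intro C hC
        exact hz.2 C ⟨hz.1, hC⟩
      have h1 : ν (bad ε) ≤ ν (⋃ C : ℕ, (bad ε ∩ grow η C)) := by
        calc ν (bad ε)
            ≤ ν ((⋃ C : ℕ, (bad ε ∩ grow η C)) ∪ (bad ε \ ⋃ C : ℕ, (bad ε ∩ grow η C))) := by
              apply measure_mono
              intro z hz
              by_cases h : z ∈ ⋃ C : ℕ, (bad ε ∩ grow η C)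
              · exact Set.mem_union_left _ h
              · exact Set.mem_union_right _ ⟨hz, h⟩
          _ ≤ ν (⋃ C : ℕ, (bad ε ∩ grow η C)) + ν (bad ε \ ⋃ C : ℕ, (bad ε ∩ grow η C)) :=
              measure_union_le _ _
          _ = ν (⋃ C : ℕ, (bad ε ∩ grow η C)) := by rw [hae, add_zero]
      refine h1.trans ?_
      rw [hmono.directed_le.measure_iUnion]
      exact iSup_le fun C => key ε hε η hη C (Nat.cast_nonneg C)
    have htendsR : Tendsto (fun j : ℕ => ((1:ℝ)/(j+1)) ^ n / (ε/2) ^ n) atTop (𝓝 0) := by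
      have h1 : Tendsto (fun j : ℕ => (1:ℝ)/(j+1)) atTop (𝓝 0) :=
        tendsto_one_div_add_atTop_nhds_zero_nat
      have h2 := (h1.pow n).div_const ((ε/2) ^ n)
      rwa [zero_pow hn.ne', zero_div] at h2
    have htends : Tendsto (fun j : ℕ => ENNReal.ofReal (((1:ℝ)/(j+1)) ^ n / (ε/2) ^ n))
        atTop (𝓝 0) := by
      rw [← ENNReal.ofReal_zero]
      exact ENNReal.tendsto_ofReal htendsR
    refine le_antisymm ?_ (zero_le)
    refine ge_of_tendsto htends (Eventually.of_forall fun j => ?_)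
    exact hmain ((1:ℝ)/(j+1)) (by positivity)
  -- final assembly
  set Ξ : Set Y := {z ∈ D | ∀ ε > 0, ∃ L : ℕ, 0 < L ∧ F^[L] z ∈ D ∧
      ‖(∑ j ∈ Finset.range L, f (F^[j] z)) - (L : ℝ) • m‖ < ε} with hΞdef
  have hsubD : Ξ ⊆ D := fun z hz => hz.1
  have hnull : ν (D \ Ξ) = 0 := by
    have hsub : ∀ z, (∀ j : ℕ, f (F^[j] z) = g (F^[j] z)) →
        z ∈ D \ Ξ → z ∈ ⋃ j : ℕ, bad ((1:ℝ)/(j+1)) := by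
      intro z hz hmem
      obtain ⟨hzD, hznot⟩ := hmem
      rw [hΞdef, Set.mem_sep_iff] at hznot
      push_neg at hznot
      obtain ⟨ε, hε, hεnot⟩ := hznot hzD
      obtain ⟨j, hj⟩ := exists_nat_one_div_lt hε
      refine Set.mem_iUnion.mpr ⟨j, (hbadmem _ _).mpr ⟨hzD, fun L hL hLD => ?_⟩⟩
      have h1 := hεnot L hL hLD
      have h2 : (∑ i ∈ Finset.range L, f (F^[i] z)) - (L : ℝ) • m = φ L z := by
        simp only [hφdef, stmt12_birk]
        congr 1
        exact Finset.sum_congr rfl fun i _ => hz i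
      rw [h2] at h1
      have hj' : (1:ℝ)/(j+1) ≤ ε := le_of_lt (by exact_mod_cast hj)
      linarith
    have hΩnull : ν {z | ¬ ∀ j : ℕ, f (F^[j] z) = g (F^[j] z)} = 0 := by
      rw [← ae_iff] at *
      exact hΩ
    refine measure_mono_null (t := (⋃ j : ℕ, bad ((1:ℝ)/(j+1)))
        ∪ {z | ¬ ∀ j : ℕ, f (F^[j] z) = g (F^[j] z)}) ?_ ?_
    · intro z hz
      by_cases h : ∀ j : ℕ, f (F^[j] z) = g (F^[j] z)
      · exact Set.mem_union_left _ (hsub z h hz)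
      · exact Set.mem_union_right _ h
    · exact measure_union_null
        (measure_iUnion_null fun j => hbadnull _ (by positivity)) hΩnull
  have hge : ν D ≤ ν Ξ := by
    calc ν D = ν (Ξ ∪ (D \ Ξ)) := by rw [Set.union_diff_cancel hsubD]
      _ ≤ ν Ξ + ν (D \ Ξ) := measure_union_le _ _
      _ = ν Ξ := by rw [hnull, add_zero]
  exact le_antisymm (measure_mono hsubD) hge
end
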